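/- arXiv:0706.1855 — 8 statements merged into one kernel-verified Lean document; each statement's English description precedes it below -/
import Mathlib

section
/- Let x : Fin 6 → Fin 6 → Fin 6 → ℂ be alternating and normalized so that ∑_{i,j,k} |x i j k|² = 6, and let γ be its one-particle reduced density matrix, the 6×6 complex matrix with entries γ a b = (1/2) ∑_{j,k} (x a j k) * conj (x b j k). If λ₁ ≥ λ₂ ≥ λ₃ ≥ λ₄ ≥ λ₅ ≥ λ₆ are the eigenvalues of γ listed in non-increasing order, then λ₁ + λ₂ ≤ λ₃ + 1 (the Borland–Dennis inequality is necessary for pure-state 3-representability with rank at most 6). -/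
open Complex ComplexConjugate Finset

private lemma bd_key_ineq {X u A B : ℝ} (hX : 0 ≤ X) (hu : 0 ≤ u) (hA : 0 ≤ A) (hB : 0 ≤ B)
    (h1 : X ^ 2 + B ≤ X * (u + A)) (h2 : X ^ 2 * u ≤ A * B) : X ≤ A := by
  by_contra hcon
  push_neg at hcon
  nlinarith [mul_le_mul_of_nonneg_left h1 hX, sq_nonneg X, mul_pos (hA.trans_lt hcon) (hA.trans_lt hcon)]

set_option maxHeartbeats 1600000 in
/-- **Necessity of the Borland–Dennis inequality.**
If `x` is an alternating, normalized 3-fermion wavefunction on `ℂ⁶`, `γ` its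
one-particle reduced density matrix, and `μ 0 ≥ μ 1 ≥ ⋯ ≥ μ 5` are the eigenvalues
of `γ` listed in non-increasing order, then `μ 0 + μ 1 ≤ μ 2 + 1`. -/
theorem borland_dennis_inequality_necessary
    (x : Fin 6 → Fin 6 → Fin 6 → ℂ)
    (halt12 : ∀ i j k, x j i k = - x i j k)
    (halt13 : ∀ i j k, x k j i = - x i j k)
    (halt23 : ∀ i j k, x i k j = - x i j k)
    (hnorm : ∑ i, ∑ j, ∑ k, ‖x i j k‖ ^ 2 = 6)
    (γ : Matrix (Fin 6) (Fin 6) ℂ)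
    (hγ : ∀ a b, γ a b = (1 / 2) * ∑ j, ∑ k, x a j k * (starRingEnd ℂ) (x b j k))
    (μ : Fin 6 → ℝ)
    (hmono : ∀ i j : Fin 6, i ≤ j → μ j ≤ μ i)
    (U : Matrix (Fin 6) (Fin 6) ℂ)
    (hU : U ∈ Matrix.unitaryGroup (Fin 6) ℂ)
    (hdiag : γ = U * Matrix.diagonal (fun i => (μ i : ℂ)) * star U) :
    μ 0 + μ 1 ≤ μ 2 + 1 := by
  have hUU : U * star U = 1 := Matrix.mem_unitaryGroup_iff.mp hU
  have hU'U : star U * U = 1 := Matrix.mem_unitaryGroup_iff'.mp hU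
  set W : Matrix (Fin 6) (Fin 6) ℂ := star U with hW
  -- entrywise unitarity for columns of W
  have hWu : ∀ p q : Fin 6, (∑ k, W k p * conj (W k q)) = if p = q then 1 else 0 := by
    intro p q
    have h := congrFun (congrFun hUU q) p
    rw [Matrix.mul_apply] at h
    have : (∑ k, W k p * conj (W k q)) = ∑ j, U q j * (star U) j p := by
      apply Finset.sum_congr rfl
      intro k _
      simp [hW, Matrix.star_apply]
      ring
    rw [this, h]
    by_cases hpq : p = q
    · simp [Matrix.one_apply, hpq]
    · simp [Matrix.one_apply, hpq, Ne.symm hpq]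
  -- the contraction lemma for a unitary slot transform
  have unit_contract : ∀ f g : Fin 6 → ℂ,
      (∑ k, (∑ a, W k a * f a) * conj (∑ b, W k b * g b)) = ∑ a, f a * conj (g a) := by
    intro f g
    have step : ∀ k, (∑ a, W k a * f a) * conj (∑ b, W k b * g b)
        = ∑ a, ∑ b, f a * conj (g b) * (W k a * conj (W k b)) := by
      intro k
      rw [map_sum, Finset.sum_mul_sum]
      apply Finset.sum_congr rfl; intro a _
      apply Finset.sum_congr rfl; intro b _
      rw [map_mul]; ring
    rw [Finset.sum_congr rfl fun k _ => step k]
    rw [Finset.sum_comm]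
    have step2 : ∀ a : Fin 6, (∑ k, ∑ b, f a * conj (g b) * (W k a * conj (W k b)))
        = f a * conj (g a) := by
      intro a
      rw [Finset.sum_comm]
      have : ∀ b : Fin 6, (∑ k, f a * conj (g b) * (W k a * conj (W k b)))
          = f a * conj (g b) * (if a = b then 1 else 0) := by
        intro b
        rw [← Finset.mul_sum, hWu a b]
      rw [Finset.sum_congr rfl fun b _ => this b]
      simp
    rw [Finset.sum_congr rfl fun a _ => step2 a]
  -- the transformed wavefunction y (in the natural-orbital basis)
  obtain ⟨t1, ht1⟩ : ∃ t : Fin 6 → Fin 6 → Fin 6 → ℂ,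
      t = fun i j k => ∑ i', W i i' * x i' j k := ⟨_, rfl⟩
  obtain ⟨t2, ht2⟩ : ∃ t : Fin 6 → Fin 6 → Fin 6 → ℂ,
      t = fun i j k => ∑ j', W j j' * t1 i j' k := ⟨_, rfl⟩
  obtain ⟨y, hy⟩ : ∃ t : Fin 6 → Fin 6 → Fin 6 → ℂ,
      t = fun i j k => ∑ k', W k k' * t2 i j k' := ⟨_, rfl⟩
  -- generic pulling of constants through double sums
  have pull : ∀ (c : Fin 6 → Fin 6 → ℂ) (F : Fin 6 → Fin 6 → Fin 6 → ℂ),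
      (∑ k, ∑ i₁, ∑ i₂, c i₁ i₂ * F i₁ i₂ k) = ∑ i₁, ∑ i₂, c i₁ i₂ * ∑ k, F i₁ i₂ k := by
    intro c F
    rw [Finset.sum_comm]
    apply Finset.sum_congr rfl; intro i₁ _
    rw [Finset.sum_comm]
    apply Finset.sum_congr rfl; intro i₂ _
    rw [Finset.mul_sum]
  have hxcontr : ∀ a b : Fin 6, (∑ j, ∑ k, x a j k * conj (x b j k)) = 2 * γ a b := by
    intro a b; rw [hγ a b]; ring
  have hNt1 : ∀ a b : Fin 6, (∑ j, ∑ k, t1 a j k * conj (t1 b j k))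
      = ∑ i₁, ∑ i₂, (W a i₁ * conj (W b i₂)) * (2 * γ i₁ i₂) := by
    intro a b
    have point : ∀ j k : Fin 6, t1 a j k * conj (t1 b j k)
        = ∑ i₁, ∑ i₂, (W a i₁ * conj (W b i₂)) * (x i₁ j k * conj (x i₂ j k)) := by
      intro j k
      rw [ht1]
      simp only
      rw [map_sum, Finset.sum_mul_sum]
      apply Finset.sum_congr rfl; intro i₁ _
      apply Finset.sum_congr rfl; intro i₂ _
      rw [map_mul]; ring
    calc (∑ j, ∑ k, t1 a j k * conj (t1 b j k))
        = ∑ j, ∑ k, ∑ i₁, ∑ i₂, (W a i₁ * conj (W b i₂)) * (x i₁ j k * conj (x i₂ j k)) :=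
          Finset.sum_congr rfl fun j _ => Finset.sum_congr rfl fun k _ => point j k
      _ = ∑ j, ∑ i₁, ∑ i₂, (W a i₁ * conj (W b i₂)) * ∑ k, (x i₁ j k * conj (x i₂ j k)) :=
          Finset.sum_congr rfl fun j _ => pull _ _
      _ = ∑ i₁, ∑ i₂, (W a i₁ * conj (W b i₂)) * ∑ j, ∑ k, (x i₁ j k * conj (x i₂ j k)) := by
          have := pull (fun i₁ i₂ => W a i₁ * conj (W b i₂))
            (fun i₁ i₂ j => ∑ k, x i₁ j k * conj (x i₂ j k))
          exact this
      _ = ∑ i₁, ∑ i₂, (W a i₁ * conj (W b i₂)) * (2 * γ i₁ i₂) := by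
          apply Finset.sum_congr rfl; intro i₁ _
          apply Finset.sum_congr rfl; intro i₂ _
          rw [hxcontr i₁ i₂]
  have hMdiag : W * γ * star W = Matrix.diagonal (fun i => (μ i : ℂ)) := by
    have h1 : W * γ * star W = (W * U) * Matrix.diagonal (fun i => (μ i : ℂ)) * (W * U) := by
      rw [hdiag, hW, star_star]
      noncomm_ring
    rw [h1, hU'U, one_mul, mul_one]
  have hN : ∀ a b : Fin 6, (∑ j, ∑ k, y a j k * conj (y b j k))
      = if a = b then 2 * (μ a : ℂ) else 0 := by
    intro a b
    have c1 : (∑ j, ∑ k, y a j k * conj (y b j k)) = ∑ j, ∑ k, t2 a j k * conj (t2 b j k) := by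
      apply Finset.sum_congr rfl; intro j _
      rw [hy]
      exact unit_contract (t2 a j) (t2 b j)
    have c2 : (∑ j, ∑ k, t2 a j k * conj (t2 b j k)) = ∑ j, ∑ k, t1 a j k * conj (t1 b j k) := by
      rw [Finset.sum_comm]
      have inner : ∀ k : Fin 6, (∑ j, t2 a j k * conj (t2 b j k))
          = ∑ j', t1 a j' k * conj (t1 b j' k) := by
        intro k
        rw [ht2]
        exact unit_contract (fun j' => t1 a j' k) (fun j' => t1 b j' k)
      rw [Finset.sum_congr rfl fun k _ => inner k]
      exact Finset.sum_comm
    have hmat : (∑ i₁, ∑ i₂, W a i₁ * conj (W b i₂) * (2 * γ i₁ i₂))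
        = 2 * ((W * γ * star W) a b) := by
      rw [Finset.sum_comm]
      simp only [Matrix.mul_apply, Matrix.star_apply, Finset.sum_mul, Finset.mul_sum]
      apply Finset.sum_congr rfl; intro i₂ _
      apply Finset.sum_congr rfl; intro i₁ _
      simp only [Complex.star_def]
      ring
    rw [c1, c2, hNt1, hmat, hMdiag, Matrix.diagonal_apply]
    split_ifs with h <;> simp
  -- alternating property of y
  have ht1_23 : ∀ i a b, t1 i b a = - t1 i a b := by
    intro i a b
    simp only [ht1]
    rw [← Finset.sum_neg_distrib]
    apply Finset.sum_congr rfl; intro i' _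
    rw [halt23 i' a b]; ring
  have hy23 : ∀ i j k, y i k j = - y i j k := by
    intro i j k
    simp only [hy, ht2, Finset.mul_sum]
    rw [Finset.sum_comm]
    calc (∑ o, ∑ n, W j n * (W k o * t1 i o n))
        = ∑ o, ∑ n, -(W k o * (W j n * t1 i n o)) := by
          apply Finset.sum_congr rfl; intro o _
          apply Finset.sum_congr rfl; intro n _
          rw [ht1_23 i n o]; ring
      _ = - ∑ o, ∑ n, W k o * (W j n * t1 i n o) := by
          simp [Finset.sum_neg_distrib]
  have ht2_12 : ∀ a b c, t2 b a c = - t2 a b c := by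
    intro a b c
    simp only [ht2, ht1, Finset.mul_sum]
    rw [Finset.sum_comm]
    calc (∑ o, ∑ n, W a n * (W b o * x o n c))
        = ∑ o, ∑ n, -(W b o * (W a n * x n o c)) := by
          apply Finset.sum_congr rfl; intro o _
          apply Finset.sum_congr rfl; intro n _
          rw [halt12 o n c]; ring
      _ = - ∑ o, ∑ n, W b o * (W a n * x n o c) := by
          simp [Finset.sum_neg_distrib]
  have hy12 : ∀ i j k, y j i k = - y i j k := by
    intro i j k
    simp only [hy]
    rw [← Finset.sum_neg_distrib]
    apply Finset.sum_congr rfl; intro k' _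
    rw [ht2_12 i j k']; ring
  have hy13 : ∀ i j k, y k j i = - y i j k := by
    intro i j k
    rw [hy12 j k i, hy23 j i k, hy12 i j k]; ring
  have hcyc : ∀ i j k, y k i j = y i j k := by
    intro i j k
    rw [hy12 i k j, hy23 i j k]; ring
  have yz12 : ∀ i k, y i i k = 0 := by
    intro i k; linear_combination (hy12 i i k) / 2
  have yz23 : ∀ i j, y i j j = 0 := by
    intro i j; linear_combination (hy23 i j j) / 2
  have yz13 : ∀ i j, y i j i = 0 := by
    intro i j; linear_combination (hy13 i j i) / 2
  have np12 : ∀ i j k, Complex.normSq (y j i k) = Complex.normSq (y i j k) := by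
    intro i j k; rw [hy12]; exact Complex.normSq_neg _
  have np23 : ∀ i j k, Complex.normSq (y i k j) = Complex.normSq (y i j k) := by
    intro i j k; rw [hy23]; exact Complex.normSq_neg _
  have np13 : ∀ i j k, Complex.normSq (y k j i) = Complex.normSq (y i j k) := by
    intro i j k; rw [hy13]; exact Complex.normSq_neg _
  -- trace identity : ∑ μ = 3
  have hnorm' : (∑ i, ∑ j, ∑ k, (Complex.normSq (x i j k) : ℝ)) = 6 := by
    have : ∀ i j k : Fin 6, ‖x i j k‖ ^ 2 = Complex.normSq (x i j k) :=
      fun i j k => Complex.sq_norm _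
    calc (∑ i, ∑ j, ∑ k, (Complex.normSq (x i j k) : ℝ))
        = ∑ i, ∑ j, ∑ k, ‖x i j k‖ ^ 2 := by
          refine Finset.sum_congr rfl fun i _ => Finset.sum_congr rfl fun j _ =>
            Finset.sum_congr rfl fun k _ => (this i j k).symm
      _ = 6 := hnorm
  have htrC : Matrix.trace γ = 3 := by
    have hdiagterm : ∀ a, γ a a = ((1 : ℂ)/2) * ∑ j, ∑ k, (Complex.normSq (x a j k) : ℂ) := by
      intro a; rw [hγ]; congr 1
      refine Finset.sum_congr rfl fun j _ => Finset.sum_congr rfl fun k _ => Complex.mul_conj _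
    have hcast : (∑ a, ∑ j, ∑ k, (Complex.normSq (x a j k) : ℂ)) = ((6 : ℝ) : ℂ) := by
      rw [← hnorm']
      push_cast
      rfl
    calc Matrix.trace γ = ∑ a, γ a a := by rw [Matrix.trace]; rfl
      _ = ((1:ℂ)/2) * ∑ a, ∑ j, ∑ k, (Complex.normSq (x a j k) : ℂ) := by
          rw [Finset.mul_sum]
          exact Finset.sum_congr rfl fun a _ => hdiagterm a
      _ = ((1:ℂ)/2) * ((6:ℝ):ℂ) := by rw [hcast]
      _ = 3 := by norm_num
  have htr : μ 0 + μ 1 + μ 2 + μ 3 + μ 4 + μ 5 = 3 := by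
    have htrD : Matrix.trace γ = ((μ 0 + μ 1 + μ 2 + μ 3 + μ 4 + μ 5 : ℝ) : ℂ) := by
      rw [hdiag]
      rw [Matrix.trace_mul_cycle]
      rw [hU'U, Matrix.one_mul, Matrix.trace_diagonal]
      rw [Fin.sum_univ_six]
      push_cast
      ring
    have := htrC.symm.trans htrD
    exact_mod_cast this.symm
  -- occupation number expansions
  have mkexp : ∀ a : Fin 6, (∑ j, ∑ k, y a j k * conj (y a j k)) = 2 * (μ a : ℂ) := by
    intro a; have h := hN a a; rwa [if_pos rfl] at h
  have e0 := mkexp 0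
  have e1 := mkexp 1
  have e2 := mkexp 2
  have e3 := mkexp 3
  have e4 := mkexp 4
  have e5 := mkexp 5
  simp only [Complex.mul_conj] at e0 e1 e2 e3 e4 e5
  -- unexpanded versions (reals)
  have h22 : (∑ j, ∑ k, (Complex.normSq (y 2 j k) : ℝ)) = 2 * μ 2 := by exact_mod_cast e2
  simp only [Fin.sum_univ_six] at e0 e1 e2 e3 e4 e5
  simp only [yz12, yz23, yz13, Complex.normSq_zero, Complex.ofReal_zero, add_zero, zero_add]
    at e0 e1 e2 e3 e4 e5
  simp only [np12, np23, np13] at e0 e1 e2 e3 e4 e5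
  norm_cast at e0 e1 e2 e3 e4 e5
  -- the contracted vector r
  obtain ⟨r, hr⟩ : ∃ r : Fin 6 → Fin 6 → ℂ, r = fun j k =>
      conj (y 0 1 3) * y 3 j k + conj (y 0 1 4) * y 4 j k + conj (y 0 1 5) * y 5 j k := ⟨_, rfl⟩
  have cc : ∀ z : ℂ, conj z * z = (Complex.normSq z : ℂ) := by
    intro z; rw [mul_comm]; exact Complex.mul_conj z
  -- evaluation of r at the special pairs
  have hr01 : r 0 1 = ((Complex.normSq (y 0 1 3) + Complex.normSq (y 0 1 4)
      + Complex.normSq (y 0 1 5) : ℝ) : ℂ) := by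
    rw [hr]; simp only
    rw [hcyc 0 1 3, hcyc 0 1 4, hcyc 0 1 5, cc, cc, cc]
    push_cast; ring
  have hr10 : r 1 0 = -(((Complex.normSq (y 0 1 3) + Complex.normSq (y 0 1 4)
      + Complex.normSq (y 0 1 5) : ℝ)) : ℂ) := by
    rw [hr]; simp only
    rw [hy23 3 0 1, hy23 4 0 1, hy23 5 0 1, hcyc 0 1 3, hcyc 0 1 4, hcyc 0 1 5]
    simp only [mul_neg]
    rw [cc, cc, cc]
    push_cast; ring
  have hy201 : y 2 0 1 = y 0 1 2 := hcyc 0 1 2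
  have hy210 : y 2 1 0 = - y 0 1 2 := by rw [hy23 2 0 1, hy201]
  -- quadratic sum of r  (uses off-diagonal vanishing of the 1-RDM)
  have pointR : ∀ j k : Fin 6, r j k * conj (r j k) =
      (conj (y 0 1 3) * y 0 1 3) * (y 3 j k * conj (y 3 j k))
    + (conj (y 0 1 3) * y 0 1 4) * (y 3 j k * conj (y 4 j k))
    + (conj (y 0 1 3) * y 0 1 5) * (y 3 j k * conj (y 5 j k))
    + (conj (y 0 1 4) * y 0 1 3) * (y 4 j k * conj (y 3 j k))
    + (conj (y 0 1 4) * y 0 1 4) * (y 4 j k * conj (y 4 j k))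
    + (conj (y 0 1 4) * y 0 1 5) * (y 4 j k * conj (y 5 j k))
    + (conj (y 0 1 5) * y 0 1 3) * (y 5 j k * conj (y 3 j k))
    + (conj (y 0 1 5) * y 0 1 4) * (y 5 j k * conj (y 4 j k))
    + (conj (y 0 1 5) * y 0 1 5) * (y 5 j k * conj (y 5 j k)) := by
    intro j k; rw [hr]; simp only [map_add, map_mul, Complex.conj_conj]; ring
  have hRsumC : (∑ j, ∑ k, r j k * conj (r j k))
      = 2 * ((Complex.normSq (y 0 1 3) * μ 3 + Complex.normSq (y 0 1 4) * μ 4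
          + Complex.normSq (y 0 1 5) * μ 5 : ℝ) : ℂ) := by
    rw [Finset.sum_congr rfl fun j _ => Finset.sum_congr rfl fun k _ => pointR j k]
    simp only [Finset.sum_add_distrib, ← Finset.mul_sum]
    rw [hN 3 3, hN 3 4, hN 3 5, hN 4 3, hN 4 4, hN 4 5, hN 5 3, hN 5 4, hN 5 5]
    rw [if_pos rfl, if_pos rfl, if_pos rfl,
      if_neg (by decide : ¬ ((3:Fin 6) = 4)), if_neg (by decide : ¬ ((3:Fin 6) = 5)),
      if_neg (by decide : ¬ ((4:Fin 6) = 3)), if_neg (by decide : ¬ ((4:Fin 6) = 5)),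
      if_neg (by decide : ¬ ((5:Fin 6) = 3)), if_neg (by decide : ¬ ((5:Fin 6) = 4))]
    rw [cc, cc, cc]
    push_cast; ring
  -- linear contraction with orbital 2 vanishes
  have pointE : ∀ j k : Fin 6, r j k * conj (y 2 j k) =
      conj (y 0 1 3) * (y 3 j k * conj (y 2 j k))
    + conj (y 0 1 4) * (y 4 j k * conj (y 2 j k))
    + conj (y 0 1 5) * (y 5 j k * conj (y 2 j k)) := by
    intro j k; rw [hr]; ring
  have hE0 : (∑ j, ∑ k, r j k * conj (y 2 j k)) = 0 := by
    rw [Finset.sum_congr rfl fun j _ => Finset.sum_congr rfl fun k _ => pointE j k]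
    simp only [Finset.sum_add_distrib, ← Finset.mul_sum]
    rw [hN 3 2, hN 4 2, hN 5 2]
    rw [if_neg (by decide : ¬ ((3:Fin 6) = 2)), if_neg (by decide : ¬ ((4:Fin 6) = 2)),
      if_neg (by decide : ¬ ((5:Fin 6) = 2))]
    ring
  -- sums over pairs, removing the two special entries (0,1), (1,0)
  have h10mem : ((1:Fin 6), (0:Fin 6)) ∈ (Finset.univ.erase ((0:Fin 6), (1:Fin 6))) := by decide
  obtain ⟨TT, hTT⟩ : ∃ T : Finset (Fin 6 × Fin 6),
      T = (Finset.univ.erase ((0:Fin 6),(1:Fin 6))).erase ((1:Fin 6),(0:Fin 6)) := ⟨_, rfl⟩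
  have splitC : ∀ f : Fin 6 × Fin 6 → ℂ, (∑ q : Fin 6 × Fin 6, f q)
      = f (0,1) + f (1,0) + ∑ q ∈ TT, f q := by
    intro f
    rw [← Finset.add_sum_erase _ f (Finset.mem_univ ((0:Fin 6),(1:Fin 6)))]
    rw [← Finset.add_sum_erase _ f h10mem]
    rw [hTT]; ring
  have splitR : ∀ f : Fin 6 × Fin 6 → ℝ, (∑ q : Fin 6 × Fin 6, f q)
      = f (0,1) + f (1,0) + ∑ q ∈ TT, f q := by
    intro f
    rw [← Finset.add_sum_erase _ f (Finset.mem_univ ((0:Fin 6),(1:Fin 6)))]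
    rw [← Finset.add_sum_erase _ f h10mem]
    rw [hTT]; ring
  obtain ⟨X, hX⟩ : ∃ X : ℝ, X = Complex.normSq (y 0 1 3) + Complex.normSq (y 0 1 4)
      + Complex.normSq (y 0 1 5) := ⟨_, rfl⟩
  obtain ⟨uu, huu⟩ : ∃ u : ℝ, u = Complex.normSq (y 0 1 2) := ⟨_, rfl⟩
  obtain ⟨NT, hNT⟩ : ∃ N : ℝ, N = Complex.normSq (y 0 1 3) * μ 3
      + Complex.normSq (y 0 1 4) * μ 4 + Complex.normSq (y 0 1 5) * μ 5 := ⟨_, rfl⟩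
  have hX0 : 0 ≤ X := by
    rw [hX]
    have a1 := Complex.normSq_nonneg (y 0 1 3)
    have a2 := Complex.normSq_nonneg (y 0 1 4)
    have a3 := Complex.normSq_nonneg (y 0 1 5)
    linarith only [a1, a2, a3]
  have huu0 : 0 ≤ uu := by rw [huu]; exact Complex.normSq_nonneg _
  have hNTle : NT ≤ X * μ 2 := by
    rw [hNT]
    have h3 := mul_le_mul_of_nonneg_left (hmono 2 3 (by decide)) (Complex.normSq_nonneg (y 0 1 3))
    have h4 := mul_le_mul_of_nonneg_left (hmono 2 4 (by decide)) (Complex.normSq_nonneg (y 0 1 4))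
    have h5 := mul_le_mul_of_nonneg_left (hmono 2 5 (by decide)) (Complex.normSq_nonneg (y 0 1 5))
    have hXmul : X * μ 2 = Complex.normSq (y 0 1 3) * μ 2 + Complex.normSq (y 0 1 4) * μ 2
        + Complex.normSq (y 0 1 5) * μ 2 := by rw [hX]; ring
    rw [hXmul]
    linarith only [h3, h4, h5]
  -- pair-indexed total sums
  have hRpair : (∑ q : Fin 6 × Fin 6, (Complex.normSq (r q.1 q.2) : ℝ)) = 2 * NT := by
    have hconv : (∑ q : Fin 6 × Fin 6, (Complex.normSq (r q.1 q.2) : ℝ))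
        = ∑ j, ∑ k, (Complex.normSq (r j k) : ℝ) := by
      rw [Fintype.sum_prod_type]
    rw [hconv, hNT]
    have h := hRsumC
    simp only [Complex.mul_conj] at h
    exact_mod_cast h
  have hEpair : (∑ q : Fin 6 × Fin 6, r q.1 q.2 * conj (y 2 q.1 q.2)) = 0 := by
    rw [Fintype.sum_prod_type]; exact hE0
  have h2pair : (∑ q : Fin 6 × Fin 6, (Complex.normSq (y 2 q.1 q.2) : ℝ)) = 2 * μ 2 := by
    rw [Fintype.sum_prod_type]; exact h22
  -- the three TT sums
  have hBsum : (∑ q ∈ TT, (Complex.normSq (r q.1 q.2) : ℝ)) = 2 * NT - 2 * (X * X) := by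
    have h := splitR (fun q => (Complex.normSq (r q.1 q.2) : ℝ))
    rw [hRpair] at h
    simp only at h
    rw [hr01, hr10] at h
    rw [Complex.normSq_neg, Complex.normSq_ofReal, ← hX] at h
    linarith
  have hAsum : (∑ q ∈ TT, (Complex.normSq (y 2 q.1 q.2) : ℝ)) = 2 * μ 2 - 2 * uu := by
    have h := splitR (fun q => (Complex.normSq (y 2 q.1 q.2) : ℝ))
    rw [h2pair] at h
    simp only at h
    rw [hy201, hy210, Complex.normSq_neg, ← huu] at h
    linarith
  have hEsum : (∑ q ∈ TT, r q.1 q.2 * conj (y 2 q.1 q.2)) = -(2 * (X:ℂ) * conj (y 0 1 2)) := by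
    have h := splitC (fun q => r q.1 q.2 * conj (y 2 q.1 q.2))
    rw [hEpair] at h
    simp only at h
    rw [hr01, hr10, hy201, hy210, ← hX] at h
    simp only [map_neg, mul_neg, neg_mul, neg_neg] at h
    linear_combination -h
  -- nonnegativity
  have hBpos : (0:ℝ) ≤ ∑ q ∈ TT, (Complex.normSq (r q.1 q.2) : ℝ) :=
    Finset.sum_nonneg fun q _ => Complex.normSq_nonneg _
  have hApos : (0:ℝ) ≤ ∑ q ∈ TT, (Complex.normSq (y 2 q.1 q.2) : ℝ) :=
    Finset.sum_nonneg fun q _ => Complex.normSq_nonneg _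
  have hA0 : 0 ≤ μ 2 - uu := by linarith only [hApos, hAsum]
  have hB0 : 0 ≤ NT - X * X := by linarith only [hBpos, hBsum]
  -- Cauchy–Schwarz
  have habs1 : ‖∑ q ∈ TT, r q.1 q.2 * conj (y 2 q.1 q.2)‖
      ≤ ∑ q ∈ TT, ‖r q.1 q.2‖ * ‖y 2 q.1 q.2‖ := by
    calc ‖∑ q ∈ TT, r q.1 q.2 * conj (y 2 q.1 q.2)‖
        ≤ ∑ q ∈ TT, ‖r q.1 q.2 * conj (y 2 q.1 q.2)‖ :=
          norm_sum_le _ _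
      _ = ∑ q ∈ TT, ‖r q.1 q.2‖ * ‖y 2 q.1 q.2‖ := by
          refine Finset.sum_congr rfl fun q _ => ?_
          rw [norm_mul, Complex.norm_conj]
  have hCS := Finset.sum_mul_sq_le_sq_mul_sq TT (fun q => ‖r q.1 q.2‖)
    (fun q => ‖y 2 q.1 q.2‖)
  have hsq1 : (∑ q ∈ TT, ‖r q.1 q.2‖ ^ 2)
      = ∑ q ∈ TT, (Complex.normSq (r q.1 q.2) : ℝ) :=
    Finset.sum_congr rfl fun q _ => Complex.sq_norm _
  have hsq2 : (∑ q ∈ TT, ‖y 2 q.1 q.2‖ ^ 2)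
      = ∑ q ∈ TT, (Complex.normSq (y 2 q.1 q.2) : ℝ) :=
    Finset.sum_congr rfl fun q _ => Complex.sq_norm _
  have hLHS : ‖∑ q ∈ TT, r q.1 q.2 * conj (y 2 q.1 q.2)‖
      = 2 * X * ‖y 0 1 2‖ := by
    rw [hEsum]
    rw [norm_neg]
    rw [norm_mul, norm_mul, Complex.norm_conj, Complex.norm_real, Complex.norm_two,
      Real.norm_eq_abs, _root_.abs_of_nonneg hX0]
  have hXu : X ^ 2 * uu ≤ (μ 2 - uu) * (NT - X * X) := by
    have h1 : (2 * X * ‖y 0 1 2‖) ^ 2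
        ≤ (2 * NT - 2 * (X * X)) * (2 * μ 2 - 2 * uu) := by
      calc (2 * X * ‖y 0 1 2‖) ^ 2
          = ‖∑ q ∈ TT, r q.1 q.2 * conj (y 2 q.1 q.2)‖ ^ 2 := by rw [hLHS]
        _ ≤ (∑ q ∈ TT, ‖r q.1 q.2‖ * ‖y 2 q.1 q.2‖) ^ 2 := by
            apply pow_le_pow_left₀ (norm_nonneg _) habs1
        _ ≤ (∑ q ∈ TT, ‖r q.1 q.2‖ ^ 2)
            * (∑ q ∈ TT, ‖y 2 q.1 q.2‖ ^ 2) := hCS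
        _ = (2 * NT - 2 * (X * X)) * (2 * μ 2 - 2 * uu) := by
            rw [hsq1, hsq2, hBsum, hAsum]
    rw [show (2 * X * ‖y 0 1 2‖) ^ 2
        = 4 * (X ^ 2 * (‖y 0 1 2‖ ^ 2)) from by ring] at h1
    rw [Complex.sq_norm, ← huu] at h1
    rw [show (2 * NT - 2 * (X * X)) * (2 * μ 2 - 2 * uu)
        = 4 * ((μ 2 - uu) * (NT - X * X)) from by ring] at h1
    linarith only [h1]
  have hC1 : X ^ 2 + (NT - X * X) ≤ X * (uu + (μ 2 - uu)) := by
    rw [show X ^ 2 + (NT - X * X) = NT from by ring, show X * (uu + (μ 2 - uu)) = X * μ 2 from by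
      ring]
    exact hNTle
  have hXA : X ≤ μ 2 - uu := bd_key_ineq hX0 huu0 hA0 hB0 hC1 hXu
  rw [hX, huu] at hXA
  linarith only [e0, e1, e2, e3, e4, e5, htr, hXA, Complex.normSq_nonneg (y 2 3 4),
    Complex.normSq_nonneg (y 2 3 5), Complex.normSq_nonneg (y 2 4 5),
    Complex.normSq_nonneg (y 3 4 5)]
end

section
/- Let λ : Fin 6 → ℝ be non-increasing with 0 ≤ λ k ≤ 1 for all k, ∑_k λ k = 3, λ₁ + λ₆ = 1, λ₂ + λ₅ = 1, λ₃ + λ₄ = 1, and λ₁ + λ₂ ≤ λ₃ + 1. Then there exists an alternating x : Fin 6 → Fin 6 → Fin 6 → ℂ with ∑_{i,j,k} |x i j k|² = 6 whose one-particle reduced density matrix γ (with entries γ a b = (1/2) ∑_{j,k} (x a j k) * conj (x b j k)) is the diagonal matrix with diagonal entries λ₁, …, λ₆. In fact one may take x supported on the four Slater determinants with index sets {1,2,3}, {1,4,5}, {6,2,4}, {6,5,3}, with squared coefficient magnitudes (λ₂+λ₃−λ₆)/2, (λ₁−λ₂+λ₄)/2, (λ₂−λ₃+λ₆)/2, and (λ₆−λ₂+λ₃)/2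 respectively. -/
set_option maxHeartbeats 1000000
set_option maxRecDepth 10000



/-- The (unnormalized-coefficient) Slater determinant with index set `{a, b, c}`:
the alternating 3-tensor obtained by antisymmetrizing `e_a ⊗ e_b ⊗ e_c`.  Its
coefficient at `(i, j, k)` is the determinant of the 3×3 matrix of Kronecker
deltas; its squared norm `∑ |·|²` equals `6` when `a, b, c` are distinct. -/
noncomputable def slater (a b c : Fin 6) (i j k : Fin 6) : ℂ :=
  Matrix.det (fun p q : Fin 3 => if ![a, b, c] p = ![i, j, k] q then (1 : ℂ) else 0)


/-- Integer-valued version of the Slater coefficient. -/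
def slZ (a b c i j k : Fin 6) : ℤ :=
    (if a=i then (1:ℤ) else 0)*(if b=j then 1 else 0)*(if c=k then 1 else 0)
  - (if a=i then 1 else 0)*(if b=k then 1 else 0)*(if c=j then 1 else 0)
  - (if a=j then 1 else 0)*(if b=i then 1 else 0)*(if c=k then 1 else 0)
  + (if a=j then 1 else 0)*(if b=k then 1 else 0)*(if c=i then 1 else 0)
  + (if a=k then 1 else 0)*(if b=i then 1 else 0)*(if c=j then 1 else 0)
  - (if a=k then 1 else 0)*(if b=j then 1 else 0)*(if c=i then 1 else 0)

def S : Fin 4 → Fin 6 → Fin 6 → Fin 6 → ℤ :=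
  ![slZ 0 1 2, slZ 0 3 4, slZ 5 1 3, slZ 5 4 2]

def memBD : Fin 4 → Fin 6 → ℤ :=
  ![![1,1,1,0,0,0], ![1,0,0,1,1,0], ![0,1,0,1,0,1], ![0,0,1,0,1,1]]

lemma slater_eq (a b c i j k : Fin 6) : slater a b c i j k =
    (if a=i then (1:ℂ) else 0)*(if b=j then 1 else 0)*(if c=k then 1 else 0)
  - (if a=i then 1 else 0)*(if b=k then 1 else 0)*(if c=j then 1 else 0)
  - (if a=j then 1 else 0)*(if b=i then 1 else 0)*(if c=k then 1 else 0)
  + (if a=j then 1 else 0)*(if b=k then 1 else 0)*(if c=i then 1 else 0)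
  + (if a=k then 1 else 0)*(if b=i then 1 else 0)*(if c=j then 1 else 0)
  - (if a=k then 1 else 0)*(if b=j then 1 else 0)*(if c=i then 1 else 0) := by
  rw [slater]
  refine (Matrix.det_fin_three _).trans ?_
  have e1 : ![a, b, c] 2 = c := rfl
  have e2 : ![i, j, k] 2 = k := rfl
  have e3 : ![a, b, c] 0 = a := rfl
  have e4 : ![i, j, k] 0 = i := rfl
  have e5 : ![a, b, c] 1 = b := rfl
  have e6 : ![i, j, k] 1 = j := rfl
  simp only [e1, e2, e3, e4, e5, e6]

lemma slater_cast (a b c i j k : Fin 6) :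
    slater a b c i j k = ((slZ a b c i j k : ℤ) : ℂ) := by
  rw [slater_eq, slZ]
  push_cast [apply_ite (fun z : ℤ => (z : ℂ))]
  ring

lemma slZ_swap12 (a b c i j k : Fin 6) : slZ a b c j i k = - slZ a b c i j k := by
  simp only [slZ]; ring
lemma slZ_swap13 (a b c i j k : Fin 6) : slZ a b c k j i = - slZ a b c i j k := by
  simp only [slZ]; ring
lemma slZ_swap23 (a b c i j k : Fin 6) : slZ a b c i k j = - slZ a b c i j k := by
  simp only [slZ]; ring

lemma S_swap12 (m : Fin 4) (i j k : Fin 6) : S m j i k = - S m i j k := by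
  fin_cases m
  · exact slZ_swap12 0 1 2 i j k
  · exact slZ_swap12 0 3 4 i j k
  · exact slZ_swap12 5 1 3 i j k
  · exact slZ_swap12 5 4 2 i j k
lemma S_swap13 (m : Fin 4) (i j k : Fin 6) : S m k j i = - S m i j k := by
  fin_cases m
  · exact slZ_swap13 0 1 2 i j k
  · exact slZ_swap13 0 3 4 i j k
  · exact slZ_swap13 5 1 3 i j k
  · exact slZ_swap13 5 4 2 i j k
lemma S_swap23 (m : Fin 4) (i j k : Fin 6) : S m i k j = - S m i j k := by
  fin_cases m
  · exact slZ_swap23 0 1 2 i j k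
  · exact slZ_swap23 0 3 4 i j k
  · exact slZ_swap23 5 1 3 i j k
  · exact slZ_swap23 5 4 2 i j k

lemma hT : ∀ (m n : Fin 4) (a b : Fin 6),
    (∑ j, ∑ k, S m a j k * S n b j k) = if m = n ∧ a = b then 2 * memBD m a else 0 := by
  decide


/-- **Sufficiency of the Borland–Dennis conditions, with an explicit pre-image.**
If `λ` is non-increasing, `0 ≤ λ k ≤ 1`, `∑ λ k = 3`, the Borland–Dennis equalities
`λ₁+λ₆ = λ₂+λ₅ = λ₃+λ₄ = 1` hold and `λ₁+λ₂ ≤ λ₃+1`, then the diagonal matrix with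
diagonal `λ` is the one-particle reduced density matrix of an alternating normalized
3-fermion wavefunction supported on the four Slater determinants with index sets
`{1,2,3}, {1,4,5}, {6,2,4}, {6,5,3}` (in 0-based indices `{0,1,2}, {0,3,4}, {5,1,3},
{5,4,2}`), with the indicated squared coefficient magnitudes. -/
theorem borland_dennis_sufficient_explicit
    (lam : Fin 6 → ℝ)
    (hmono : ∀ i j : Fin 6, i ≤ j → lam j ≤ lam i)
    (hbound : ∀ k, 0 ≤ lam k ∧ lam k ≤ 1)
    (hsum : ∑ k, lam k = 3)
    (heq1 : lam 0 + lam 5 = 1) (heq2 : lam 1 + lam 4 = 1) (heq3 : lam 2 + lam 3 = 1)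
    (hineq : lam 0 + lam 1 ≤ lam 2 + 1) :
    ∃ x : Fin 6 → Fin 6 → Fin 6 → ℂ,
      (∀ i j k, x j i k = - x i j k) ∧
      (∀ i j k, x k j i = - x i j k) ∧
      (∀ i j k, x i k j = - x i j k) ∧
      (∑ i, ∑ j, ∑ k, ‖x i j k‖ ^ 2 = 6) ∧
      (∀ a b, (1 / 2 : ℂ) * ∑ j, ∑ k, x a j k * (starRingEnd ℂ) (x b j k)
          = Matrix.diagonal (fun i => (lam i : ℂ)) a b) ∧
      ∃ c1 c2 c3 c4 : ℂ,
        (∀ i j k, x i j k =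
            c1 * slater 0 1 2 i j k + c2 * slater 0 3 4 i j k +
            c3 * slater 5 1 3 i j k + c4 * slater 5 4 2 i j k) ∧
        ‖c1‖ ^ 2 = (lam 1 + lam 2 - lam 5) / 2 ∧
        ‖c2‖ ^ 2 = (lam 0 - lam 1 + lam 3) / 2 ∧
        ‖c3‖ ^ 2 = (lam 1 - lam 2 + lam 5) / 2 ∧
        ‖c4‖ ^ 2 = (lam 5 - lam 1 + lam 2) / 2 := by
  -- basic inequalities
  have h01 : lam 1 ≤ lam 0 := hmono 0 1 (by decide)
  have h12 : lam 2 ≤ lam 1 := hmono 1 2 (by decide)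
  have h25 : lam 5 ≤ lam 2 := hmono 2 5 (by decide)
  have hb1 := hbound 1; have hb3 := hbound 3; have hb5 := hbound 5
  have ht1 : (0:ℝ) ≤ (lam 1 + lam 2 - lam 5) / 2 := by linarith [hb1.1]
  have ht2 : (0:ℝ) ≤ (lam 0 - lam 1 + lam 3) / 2 := by linarith [hb3.1]
  have ht3 : (0:ℝ) ≤ (lam 1 - lam 2 + lam 5) / 2 := by linarith [hb5.1]
  have ht4 : (0:ℝ) ≤ (lam 5 - lam 1 + lam 2) / 2 := by linarith
  set s1 : ℝ := Real.sqrt ((lam 1 + lam 2 - lam 5) / 2) with hs1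
  set s2 : ℝ := Real.sqrt ((lam 0 - lam 1 + lam 3) / 2) with hs2
  set s3 : ℝ := Real.sqrt ((lam 1 - lam 2 + lam 5) / 2) with hs3
  set s4 : ℝ := Real.sqrt ((lam 5 - lam 1 + lam 2) / 2) with hs4
  have hsq1 : s1 ^ 2 = (lam 1 + lam 2 - lam 5) / 2 := Real.sq_sqrt ht1
  have hsq2 : s2 ^ 2 = (lam 0 - lam 1 + lam 3) / 2 := Real.sq_sqrt ht2
  have hsq3 : s3 ^ 2 = (lam 1 - lam 2 + lam 5) / 2 := Real.sq_sqrt ht3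
  have hsq4 : s4 ^ 2 = (lam 5 - lam 1 + lam 2) / 2 := Real.sq_sqrt ht4
  set c1 : ℂ := (s1 : ℂ) with hc1
  set c2 : ℂ := (s2 : ℂ) with hc2
  set c3 : ℂ := (s3 : ℂ) with hc3
  set c4 : ℂ := (s4 : ℂ) with hc4
  have hcc1 : c1 * c1 = (((lam 1 + lam 2 - lam 5) / 2 : ℝ) : ℂ) := by
    rw [hc1, ← Complex.ofReal_mul, ← sq, hsq1]
  have hcc2 : c2 * c2 = (((lam 0 - lam 1 + lam 3) / 2 : ℝ) : ℂ) := by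
    rw [hc2, ← Complex.ofReal_mul, ← sq, hsq2]
  have hcc3 : c3 * c3 = (((lam 1 - lam 2 + lam 5) / 2 : ℝ) : ℂ) := by
    rw [hc3, ← Complex.ofReal_mul, ← sq, hsq3]
  have hcc4 : c4 * c4 = (((lam 5 - lam 1 + lam 2) / 2 : ℝ) : ℂ) := by
    rw [hc4, ← Complex.ofReal_mul, ← sq, hsq4]
  set x : Fin 6 → Fin 6 → Fin 6 → ℂ := fun i j k =>
    c1 * ((S 0 i j k : ℤ) : ℂ) + c2 * ((S 1 i j k : ℤ) : ℂ) +
    c3 * ((S 2 i j k : ℤ) : ℂ) + c4 * ((S 3 i j k : ℤ) : ℂ) with hxdef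
  have hx : ∀ i j k, x i j k =
      c1 * ((S 0 i j k : ℤ) : ℂ) + c2 * ((S 1 i j k : ℤ) : ℂ) +
      c3 * ((S 2 i j k : ℤ) : ℂ) + c4 * ((S 3 i j k : ℤ) : ℂ) := fun _ _ _ => rfl
  -- pointwise expansion of x * conj x
  have h1 : ∀ a b j k : Fin 6, x a j k * (starRingEnd ℂ) (x b j k) =
      c1*c1 * ((S 0 a j k * S 0 b j k : ℤ) : ℂ) +
      c1*c2 * ((S 0 a j k * S 1 b j k : ℤ) : ℂ) +
      c1*c3 * ((S 0 a j k * S 2 b j k : ℤ) : ℂ) +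
      c1*c4 * ((S 0 a j k * S 3 b j k : ℤ) : ℂ) +
      c2*c1 * ((S 1 a j k * S 0 b j k : ℤ) : ℂ) +
      c2*c2 * ((S 1 a j k * S 1 b j k : ℤ) : ℂ) +
      c2*c3 * ((S 1 a j k * S 2 b j k : ℤ) : ℂ) +
      c2*c4 * ((S 1 a j k * S 3 b j k : ℤ) : ℂ) +
      c3*c1 * ((S 2 a j k * S 0 b j k : ℤ) : ℂ) +
      c3*c2 * ((S 2 a j k * S 1 b j k : ℤ) : ℂ) +
      c3*c3 * ((S 2 a j k * S 2 b j k : ℤ) : ℂ) +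
      c3*c4 * ((S 2 a j k * S 3 b j k : ℤ) : ℂ) +
      c4*c1 * ((S 3 a j k * S 0 b j k : ℤ) : ℂ) +
      c4*c2 * ((S 3 a j k * S 1 b j k : ℤ) : ℂ) +
      c4*c3 * ((S 3 a j k * S 2 b j k : ℤ) : ℂ) +
      c4*c4 * ((S 3 a j k * S 3 b j k : ℤ) : ℂ) := by
    intro a b j k
    rw [hx, hx, hc1, hc2, hc3, hc4]
    simp only [map_add, map_mul, Complex.conj_ofReal, map_intCast]
    push_cast
    ring
  have key : ∀ a b : Fin 6, (∑ j, ∑ k, x a j k * (starRingEnd ℂ) (x b j k)) =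
      c1*c1 * ((∑ j, ∑ k, S 0 a j k * S 0 b j k : ℤ) : ℂ) +
      c1*c2 * ((∑ j, ∑ k, S 0 a j k * S 1 b j k : ℤ) : ℂ) +
      c1*c3 * ((∑ j, ∑ k, S 0 a j k * S 2 b j k : ℤ) : ℂ) +
      c1*c4 * ((∑ j, ∑ k, S 0 a j k * S 3 b j k : ℤ) : ℂ) +
      c2*c1 * ((∑ j, ∑ k, S 1 a j k * S 0 b j k : ℤ) : ℂ) +
      c2*c2 * ((∑ j, ∑ k, S 1 a j k * S 1 b j k : ℤ) : ℂ) +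
      c2*c3 * ((∑ j, ∑ k, S 1 a j k * S 2 b j k : ℤ) : ℂ) +
      c2*c4 * ((∑ j, ∑ k, S 1 a j k * S 3 b j k : ℤ) : ℂ) +
      c3*c1 * ((∑ j, ∑ k, S 2 a j k * S 0 b j k : ℤ) : ℂ) +
      c3*c2 * ((∑ j, ∑ k, S 2 a j k * S 1 b j k : ℤ) : ℂ) +
      c3*c3 * ((∑ j, ∑ k, S 2 a j k * S 2 b j k : ℤ) : ℂ) +
      c3*c4 * ((∑ j, ∑ k, S 2 a j k * S 3 b j k : ℤ) : ℂ) +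
      c4*c1 * ((∑ j, ∑ k, S 3 a j k * S 0 b j k : ℤ) : ℂ) +
      c4*c2 * ((∑ j, ∑ k, S 3 a j k * S 1 b j k : ℤ) : ℂ) +
      c4*c3 * ((∑ j, ∑ k, S 3 a j k * S 2 b j k : ℤ) : ℂ) +
      c4*c4 * ((∑ j, ∑ k, S 3 a j k * S 3 b j k : ℤ) : ℂ) := by
    intro a b
    rw [Finset.sum_congr rfl fun j _ => Finset.sum_congr rfl fun k _ => h1 a b j k]
    simp only [Finset.sum_add_distrib, ← Finset.mul_sum]
    push_cast
    ring
  -- gamma claim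
  have gamma : ∀ a b : Fin 6,
      (1 / 2 : ℂ) * ∑ j, ∑ k, x a j k * (starRingEnd ℂ) (x b j k)
        = Matrix.diagonal (fun i => (lam i : ℂ)) a b := by
    intro a b
    rw [key a b, hT 0 0 a b, hT 0 1 a b, hT 0 2 a b, hT 0 3 a b, hT 1 0 a b,
      hT 1 1 a b, hT 1 2 a b, hT 1 3 a b, hT 2 0 a b, hT 2 1 a b, hT 2 2 a b,
      hT 2 3 a b, hT 3 0 a b, hT 3 1 a b, hT 3 2 a b, hT 3 3 a b]
    rcases eq_or_ne a b with rfl | hab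
    · simp only [Matrix.diagonal_apply_eq]
      norm_num
      rw [hcc1, hcc2, hcc3, hcc4]
      have e1 : ((lam 0 : ℝ) : ℂ) + ((lam 5 : ℝ) : ℂ) = 1 := by exact_mod_cast heq1
      have e2 : ((lam 1 : ℝ) : ℂ) + ((lam 4 : ℝ) : ℂ) = 1 := by exact_mod_cast heq2
      have e3 : ((lam 2 : ℝ) : ℂ) + ((lam 3 : ℝ) : ℂ) = 1 := by exact_mod_cast heq3
      fin_cases a
      · norm_num [memBD, Matrix.vecHead, Matrix.vecTail]; push_cast; linear_combination (e3 - e1) / 2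
      · norm_num [memBD, Matrix.vecHead, Matrix.vecTail]; push_cast; ring
      · norm_num [memBD, Matrix.vecHead, Matrix.vecTail]; push_cast; ring
      · norm_num [memBD, Matrix.vecHead, Matrix.vecTail]; push_cast; linear_combination (e1 - e3) / 2
      · norm_num [memBD, Matrix.vecHead, Matrix.vecTail]; push_cast; linear_combination (e1 + e3 - 2 * e2) / 2
      · norm_num [memBD, Matrix.vecHead, Matrix.vecTail]; push_cast; ring
    · simp [hab, Matrix.diagonal_apply_ne _ hab]
  -- norm
  have hdiag : ∀ i : Fin 6, (∑ j, ∑ k, x i j k * (starRingEnd ℂ) (x i j k))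
      = ((2 * lam i : ℝ) : ℂ) := by
    intro i
    have := gamma i i
    rw [Matrix.diagonal_apply_eq] at this
    push_cast
    linear_combination 2 * this
  have hnorm : ∑ i, ∑ j, ∑ k, ‖x i j k‖ ^ 2 = 6 := by
    have habs : ∀ z : ℂ, ‖z‖ ^ 2 = (z * (starRingEnd ℂ) z).re := by
      intro z; rw [Complex.mul_conj]; simp [Complex.sq_norm]
    calc ∑ i, ∑ j, ∑ k, ‖x i j k‖ ^ 2
        = ∑ i, (∑ j, ∑ k, x i j k * (starRingEnd ℂ) (x i j k)).re := by
          simp only [habs, Complex.re_sum]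
      _ = ∑ i, 2 * lam i := by
          refine Finset.sum_congr rfl fun i _ => ?_
          rw [hdiag i, Complex.ofReal_re]
      _ = 6 := by rw [← Finset.mul_sum, hsum]; norm_num
  refine ⟨x, ?_, ?_, ?_, hnorm, gamma, c1, c2, c3, c4, ?_, ?_, ?_, ?_, ?_⟩
  · intro i j k
    rw [hx, hx, S_swap12 0 i j k, S_swap12 1 i j k, S_swap12 2 i j k, S_swap12 3 i j k]
    push_cast
    ring
  · intro i j k
    rw [hx, hx, S_swap13 0 i j k, S_swap13 1 i j k, S_swap13 2 i j k, S_swap13 3 i j k]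
    push_cast
    ring
  · intro i j k
    rw [hx, hx, S_swap23 0 i j k, S_swap23 1 i j k, S_swap23 2 i j k, S_swap23 3 i j k]
    push_cast
    ring
  · intro i j k
    rw [hx, slater_cast, slater_cast, slater_cast, slater_cast]
    rfl
  · rw [hc1, Complex.norm_real, Real.norm_eq_abs, sq_abs, hsq1]
  · rw [hc2, Complex.norm_real, Real.norm_eq_abs, sq_abs, hsq2]
  · rw [hc3, Complex.norm_real, Real.norm_eq_abs, sq_abs, hsq3]
  · rw [hc4, Complex.norm_real, Real.norm_eq_abs, sq_abs, hsq4]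
end

section
/- Let R be a positive natural number and let X be an R×R complex matrix that is antisymmetric (Xᵀ = −X). Then every nonzero eigenvalue of the positive semidefinite Hermitian matrix X * Xᴴ (where Xᴴ is the conjugate transpose) has even multiplicity. Consequently, a one-particle density matrix γ that is pure-state 2-representable, i.e. γ a b = ∑_j (x a j) * conj (x b j) for an antisymmetric x : Fin R → Fin R → ℂ with ∑_{i,j} |x i j|² = 2, has all of its non-zero eigenvalues doubly degenerate. -/
open Matrix Module
open scoped Classical

-- abstract evenness lemma
lemma even_finrank_of_antilinear (μ : ℝ) (hμ : 0 < μ) :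
    ∀ (n : ℕ) (V : Type) [AddCommGroup V] [Module ℂ V] [FiniteDimensional ℂ V]
      (_ : Module.finrank ℂ V ≤ n)
      (J : V →ₛₗ[starRingEnd ℂ] V) (_ : ∀ v, J (J v) = ((-μ : ℝ) : ℂ) • v),
      Even (Module.finrank ℂ V) := by
  intro n
  induction n with
  | zero =>
    intro V _ _ _ h J hJ
    simp [Nat.le_zero.mp h]
  | succ n ih =>
    intro V _ _ _ h J hJ
    by_cases h0 : Module.finrank ℂ V = 0
    · simp [h0]
    · have : Nontrivial V := Module.finrank_pos_iff.mp (Nat.pos_of_ne_zero h0)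
      obtain ⟨v, hv⟩ := exists_ne (0 : V)
      have hli : LinearIndependent ℂ ![v, J v] := by
        rw [LinearIndependent.pair_iff]
        intro s t hst
        by_cases ht : t = 0
        · subst ht
          simp only [zero_smul, add_zero, smul_eq_zero, hv, or_false] at hst
          exact ⟨hst, rfl⟩
        · exfalso
          have h1 : t • J v = (-s) • v := by
            rw [neg_smul]
            exact eq_neg_of_add_eq_zero_right hst
          have hJv : J v = (t⁻¹ * (-s)) • v := by
            rw [mul_smul, ← h1, smul_smul, inv_mul_cancel₀ ht, one_smul]
          set c := t⁻¹ * (-s) with hcdef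
          have h2 := hJ v
          rw [hJv, map_smulₛₗ, hJv, smul_smul] at h2
          have hc : (starRingEnd ℂ) c * c = ((-μ : ℝ) : ℂ) :=
            smul_left_injective ℂ hv h2
          rw [Complex.conj_mul'] at hc
          have hc2 : ‖c‖ ^ 2 = -μ := by exact_mod_cast hc
          have h3 : (0:ℝ) ≤ ‖c‖ ^ 2 := by positivity
          linarith
      set W := Submodule.span ℂ (Set.range ![v, J v]) with hW
      have hWrank : Module.finrank ℂ W = 2 := by
        rw [finrank_span_eq_card hli, Fintype.card_fin]
      have hJW : ∀ w ∈ W, J w ∈ W := by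
        intro w hw
        induction hw using Submodule.span_induction with
        | mem y hy =>
          rcases hy with ⟨i, rfl⟩
          fin_cases i
          · exact Submodule.subset_span ⟨1, rfl⟩
          · show J (J v) ∈ W
            rw [hJ v]
            exact Submodule.smul_mem _ _ (Submodule.subset_span ⟨0, rfl⟩)
        | zero => simp
        | add a b _ _ ha hb => rw [map_add]; exact Submodule.add_mem _ ha hb
        | smul c a _ ha => rw [map_smulₛₗ]; exact Submodule.smul_mem _ _ ha
      -- quotient
      have hker : W ≤ LinearMap.ker ((W.mkQ).comp J) := by
        intro w hw
        simp only [LinearMap.mem_ker, LinearMap.comp_apply, Submodule.mkQ_apply,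
          Submodule.Quotient.mk_eq_zero]
        exact hJW w hw
      set Jbar := W.liftQ ((W.mkQ).comp J) hker with hJbar
      have hJbar2 : ∀ q : V ⧸ W, Jbar (Jbar q) = ((-μ : ℝ) : ℂ) • q := by
        intro q
        obtain ⟨x, rfl⟩ := Submodule.mkQ_surjective W q
        simp only [hJbar, Submodule.liftQ_apply, LinearMap.comp_apply, Submodule.mkQ_apply]
        rw [hJ x]
        simp
      have hq : Module.finrank ℂ (V ⧸ W) + Module.finrank ℂ W = Module.finrank ℂ V :=
        Submodule.finrank_quotient_add_finrank W
      have hqle : Module.finrank ℂ (V ⧸ W) ≤ n := by omega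
      have := ih (V ⧸ W) hqle Jbar hJbar2
      have : Even (Module.finrank ℂ V) := by
        rw [← hq, hWrank]
        rcases this with ⟨k, hk⟩
        exact ⟨k + 1, by omega⟩
      exact this

lemma card_eq_finrank_ker {R : ℕ} (A : Matrix (Fin R) (Fin R) ℂ) (hA : A.IsHermitian) (μ : ℝ) :
    Fintype.card {i // hA.eigenvalues i = μ}
      = Module.finrank ℂ (LinearMap.ker (A - (μ : ℂ) • 1).mulVecLin) := by
  set U : Matrix (Fin R) (Fin R) ℂ := (hA.eigenvectorUnitary : Matrix (Fin R) (Fin R) ℂ) with hU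
  have hU1 : U * star U = 1 := by
    simpa [hU] using (unitary.mul_star_self_of_mem hA.eigenvectorUnitary.2)
  have hU2 : star U * U = 1 := by
    simpa [hU] using (unitary.star_mul_self_of_mem hA.eigenvectorUnitary.2)
  have key : A - (μ : ℂ) • 1
      = U * Matrix.diagonal (fun i => (hA.eigenvalues i : ℂ) - μ) * star U := by
    have hs : A = U * Matrix.diagonal (RCLike.ofReal ∘ hA.eigenvalues) * star U :=
      hA.spectral_theorem
    have hd : Matrix.diagonal (fun i => (hA.eigenvalues i : ℂ) - μ)
        = Matrix.diagonal (RCLike.ofReal ∘ hA.eigenvalues) - (μ : ℂ) • 1 := by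
      rw [Matrix.smul_one_eq_diagonal, Matrix.diagonal_sub]
      rfl
    rw [hd, mul_sub, sub_mul, ← hs]
    congr 1
    rw [Matrix.mul_smul, Matrix.mul_one, Matrix.smul_mul, hU1]
  have hdetU : IsUnit U.det := by
    have := hU1
    have : U.det * (star U).det = 1 := by rw [← Matrix.det_mul, hU1, Matrix.det_one]
    exact IsUnit.of_mul_eq_one _ this
  have hdetsU : IsUnit (star U).det := by
    have : (star U).det * U.det = 1 := by rw [← Matrix.det_mul, hU2, Matrix.det_one]
    exact IsUnit.of_mul_eq_one _ this
  have hrank : (A - (μ : ℂ) • 1).rank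
      = Fintype.card {i // hA.eigenvalues i ≠ μ} := by
    rw [key, Matrix.rank_mul_eq_left_of_isUnit_det (star U) _ hdetsU,
      Matrix.rank_mul_eq_right_of_isUnit_det U _ hdetU, Matrix.rank_diagonal]
    apply Fintype.card_congr
    apply Equiv.subtypeEquivRight
    intro i
    rw [sub_ne_zero]
    exact not_congr ⟨fun h => by exact_mod_cast h, fun h => by exact_mod_cast h⟩
  have hrn : (A - (μ : ℂ) • 1).rank
      + Module.finrank ℂ (LinearMap.ker (A - (μ : ℂ) • 1).mulVecLin) = R := by
    have := LinearMap.finrank_range_add_finrank_ker (A - (μ : ℂ) • 1).mulVecLin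
    rw [Matrix.rank]
    simpa using this
  have hcards : Fintype.card {i // hA.eigenvalues i = μ}
      + Fintype.card {i // hA.eigenvalues i ≠ μ} = R := by
    classical
    have h1 : Fintype.card {i // ¬ hA.eigenvalues i = μ}
        = Fintype.card (Fin R) - Fintype.card {i // hA.eigenvalues i = μ} :=
      Fintype.card_subtype_compl _
    have h2 := Fintype.card_subtype_le (fun i : Fin R => hA.eigenvalues i = μ)
    simp only [Fintype.card_fin] at h1 h2
    simp only [ne_eq]
    omega
  omega

lemma key_even {R : ℕ} (X : Matrix (Fin R) (Fin R) ℂ) (hX : Xᵀ = -X)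
    (h : (X * Xᴴ).IsHermitian) (μ : ℝ) (hμ : μ ≠ 0) :
    Even (Fintype.card {i // h.eigenvalues i = μ}) := by
  by_cases hzero : Fintype.card {i // h.eigenvalues i = μ} = 0
  · simp [hzero]
  have hne : Nonempty {i // h.eigenvalues i = μ} :=
    Fintype.card_pos_iff.mp (Nat.pos_of_ne_zero hzero)
  obtain ⟨⟨i, hi⟩⟩ := hne
  have hμ0 : 0 ≤ μ := by
    have h0 : 0 ≤ h.eigenvalues i := Matrix.eigenvalues_self_mul_conjTranspose_nonneg X i
    rwa [hi] at h0
  have hμpos : 0 < μ := lt_of_le_of_ne hμ0 (Ne.symm hμ)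
  rw [card_eq_finrank_ker _ h μ]
  set A := X * Xᴴ with hA
  set K := LinearMap.ker (A - (μ : ℂ) • 1).mulVecLin with hK
  have hmem : ∀ v, v ∈ K ↔ A *ᵥ v = (μ : ℂ) • v := by
    intro v
    rw [hK, LinearMap.mem_ker, Matrix.mulVecLin_apply, Matrix.sub_mulVec, sub_eq_zero,
      Matrix.smul_mulVec, Matrix.one_mulVec]
  -- conjugation facts
  have hXc : X.map (starRingEnd ℂ) = -Xᴴ := by
    ext i j
    have h1 : X j i = -X i j := by
      have := congrFun (congrFun hX i) j
      simpa [Matrix.transpose_apply, Matrix.neg_apply] using this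
    simp [Matrix.map_apply, Matrix.conjTranspose_apply, h1]
  have conj_mulVec : ∀ (M : Matrix (Fin R) (Fin R) ℂ) (w : Fin R → ℂ),
      (M.map (starRingEnd ℂ)) *ᵥ (star w) = star (M *ᵥ w) := by
    intro M w
    ext i
    simp [Matrix.mulVec, dotProduct, Pi.star_apply, star_sum, star_mul',
      mul_comm]
  have hAc : A.map (starRingEnd ℂ) = Xᴴ * X := by
    rw [hA, Matrix.map_mul]
    have h2 : Xᴴ.map (starRingEnd ℂ) = Xᵀ := by
      ext i j
      simp [Matrix.map_apply, Matrix.conjTranspose_apply, Matrix.transpose_apply]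
    rw [hXc, h2, hX, Matrix.neg_mul, Matrix.mul_neg, neg_neg]
  set Jfun : (Fin R → ℂ) → (Fin R → ℂ) := fun w => X *ᵥ (star w) with hJfun
  have hJmem : ∀ v ∈ K, Jfun v ∈ K := by
    intro v hv
    rw [hmem] at hv ⊢
    calc A *ᵥ Jfun v = X *ᵥ ((Xᴴ * X) *ᵥ star v) := by
          rw [hJfun]; simp only [Matrix.mulVec_mulVec, hA]; rw [Matrix.mul_assoc]
      _ = X *ᵥ ((A.map (starRingEnd ℂ)) *ᵥ star v) := by rw [hAc]
      _ = X *ᵥ star (A *ᵥ v) := by rw [conj_mulVec]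
      _ = X *ᵥ star ((μ : ℂ) • v) := by rw [hv]
      _ = X *ᵥ ((μ : ℂ) • star v) := by
          congr 1
          rw [star_smul]
          congr 1
          simp
      _ = (μ : ℂ) • Jfun v := by rw [Matrix.mulVec_smul, hJfun]
  have hJJ : ∀ v ∈ K, Jfun (Jfun v) = ((-μ : ℝ) : ℂ) • v := by
    intro v hv
    rw [hmem] at hv
    have e1 : star (Jfun v) = (X.map (starRingEnd ℂ)) *ᵥ v := by
      rw [hJfun]
      simp only
      rw [← conj_mulVec X (star v), star_star]
    calc Jfun (Jfun v) = X *ᵥ ((X.map (starRingEnd ℂ)) *ᵥ v) := by rw [hJfun]; simp only; rw [e1]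
      _ = X *ᵥ ((-Xᴴ) *ᵥ v) := by rw [hXc]
      _ = -(A *ᵥ v) := by
          rw [Matrix.mulVec_mulVec, Matrix.mul_neg, Matrix.neg_mulVec, hA]
      _ = ((-μ : ℝ) : ℂ) • v := by rw [hv]; push_cast; rw [neg_smul]
  set J : K →ₛₗ[starRingEnd ℂ] K :=
    { toFun := fun w => ⟨Jfun w.1, hJmem w.1 w.2⟩
      map_add' := by
        intro a b
        apply Subtype.ext
        simp only [hJfun, Submodule.coe_add]
        rw [star_add, Matrix.mulVec_add]
      map_smul' := by
        intro c a
        apply Subtype.ext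
        simp only [hJfun, SetLike.val_smul]
        rw [star_smul, Matrix.mulVec_smul]
        rfl } with hJ
  have hJ2 : ∀ v : K, J (J v) = ((-μ : ℝ) : ℂ) • v := by
    intro v
    apply Subtype.ext
    simp only [hJ, LinearMap.coe_mk, AddHom.coe_mk, SetLike.val_smul]
    exact hJJ v.1 v.2
  exact even_finrank_of_antilinear μ hμpos (Module.finrank ℂ K) K le_rfl J hJ2

open Matrix in
open scoped Classical in
/-- For an antisymmetric complex matrix `X` (i.e. `Xᵀ = -X`), every nonzero
eigenvalue of the positive semidefinite Hermitian matrix `X * Xᴴ` has even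
multiplicity.  Consequently, a one-particle density matrix `γ` arising from a
normalized antisymmetric 2-fermion wavefunction `x`, i.e.
`γ a b = ∑ j, x a j * conj (x b j)`, has all of its nonzero eigenvalues doubly
degenerate (of even multiplicity). -/
theorem antisymmetric_squared_even_multiplicity
    (R : ℕ) (hR : 0 < R)
    (X : Matrix (Fin R) (Fin R) ℂ) (hX : Xᵀ = -X)
    (hH : (X * Xᴴ).IsHermitian)
    (x : Fin R → Fin R → ℂ) (hx : ∀ i j, x i j = - x j i)
    (hnorm : ∑ i, ∑ j, ‖x i j‖ ^ 2 = 2)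
    (γ : Matrix (Fin R) (Fin R) ℂ)
    (hγ : ∀ a b, γ a b = ∑ j, x a j * (starRingEnd ℂ) (x b j))
    (hγH : γ.IsHermitian) :
    (∀ μ : ℝ, μ ≠ 0 → Even (Fintype.card {i // hH.eigenvalues i = μ})) ∧
    (∀ μ : ℝ, μ ≠ 0 → Even (Fintype.card {i // hγH.eigenvalues i = μ})) := by
  have hY : γ = (Matrix.of x) * (Matrix.of x)ᴴ := by
    ext a b
    rw [hγ a b]
    simp [Matrix.mul_apply, Matrix.conjTranspose_apply, Matrix.of_apply]
  have hYT : (Matrix.of x)ᵀ = -(Matrix.of x) := by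
    ext i j
    simp only [Matrix.transpose_apply, Matrix.neg_apply, Matrix.of_apply]
    exact hx j i
  subst hY
  exact ⟨fun μ hμ => key_even X hX hH μ hμ, fun μ hμ => key_even _ hYT hγH μ hμ⟩
end

section
/- Let R be a positive natural number and let γ be an R×R Hermitian positive semidefinite complex matrix of trace 2 such that every nonzero eigenvalue of γ has even multiplicity. Then γ is pure-state 2-representable: there exists an antisymmetric x : Fin R → Fin R → ℂ (x i j = −x j i) with ∑_{i,j} |x i j|² = 2 such that γ a b = ∑_j (x a j) * conj (x b j) for all a, b. -/
/-- On a fintype of even cardinality there is a fixed-point-free involution. -/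
lemma exists_fpf_involution (α : Type*) [Fintype α] [DecidableEq α]
    (h : Even (Fintype.card α)) :
    ∃ σ : α → α, Function.Involutive σ ∧ ∀ a, σ a ≠ a := by
  obtain ⟨m, hm⟩ := h
  have hcard : Fintype.card α = Fintype.card (Fin m × Fin 2) := by
    simp only [hm, Fintype.card_prod, Fintype.card_fin]
    omega
  let e := Fintype.equivOfCardEq hcard
  refine ⟨fun a => e.symm ((e a).1, (e a).2 + 1), ?_, ?_⟩
  · intro a
    have h2 : ∀ b : Fin 2, b + 1 + 1 = b := by decide
    simp [h2]
  · intro a hfix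
    apply_fun e at hfix
    rw [Equiv.apply_symm_apply] at hfix
    have h2 : ∀ b : Fin 2, b + 1 ≠ b := by decide
    exact h2 (e a).2 (congrArg Prod.snd hfix)

open scoped Classical ComplexOrder in
/-- **Coleman's theorem on 2-representability (sufficiency).**
If `γ` is an `R × R` Hermitian positive semidefinite matrix of trace `2` all of
whose nonzero eigenvalues have even multiplicity, then `γ` is pure-state
2-representable: there is an antisymmetric normalized 2-fermion wavefunction `x`
with `γ a b = ∑ j, x a j * conj (x b j)`. -/
theorem two_representable_of_even_multiplicity
    (R : ℕ) (hR : 0 < R)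
    (γ : Matrix (Fin R) (Fin R) ℂ)
    (hpsd : γ.PosSemidef) (hH : γ.IsHermitian)
    (htr : γ.trace = 2)
    (hmult : ∀ μ : ℝ, μ ≠ 0 → Even (Fintype.card {i // hH.eigenvalues i = μ})) :
    ∃ x : Fin R → Fin R → ℂ,
      (∀ i j, x i j = - x j i) ∧
      (∑ i, ∑ j, ‖x i j‖ ^ 2 = 2) ∧
      (∀ a b, γ a b = ∑ j, x a j * (starRingEnd ℂ) (x b j)) := by
  set lam : Fin R → ℝ := hH.eigenvalues with hlamdef
  have hnn : ∀ i, 0 ≤ lam i := fun i => hpsd.eigenvalues_nonneg i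
  -- fiberwise involutions
  have hfiber : ∀ μ : ℝ, ∃ s : {i // lam i = μ} → {i // lam i = μ},
      Function.Involutive s ∧ (μ ≠ 0 → ∀ a, s a ≠ a) := by
    intro μ
    by_cases hμ : μ = 0
    · exact ⟨id, fun a => rfl, fun h => absurd hμ h⟩
    · obtain ⟨s, hs1, hs2⟩ := exists_fpf_involution _ (hmult μ hμ)
      exact ⟨s, hs1, fun _ => hs2⟩
  choose f hf1 hf2 using hfiber
  set F : ℝ → Fin R → Fin R := fun μ i => if h : lam i = μ then (f μ ⟨i, h⟩).1 else i
    with hFdef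
  have hFval : ∀ (μ : ℝ) (i : Fin R) (h : lam i = μ), F μ i = (f μ ⟨i, h⟩).1 := by
    intro μ i h; simp [hFdef, h]
  have hlamF : ∀ (μ : ℝ) (i : Fin R), lam i = μ → lam (F μ i) = μ := by
    intro μ i h; rw [hFval μ i h]; exact (f μ ⟨i, h⟩).2
  have hFF : ∀ (μ : ℝ) (i : Fin R) (h : lam i = μ), F μ (F μ i) = i := by
    intro μ i h
    have h' : lam (F μ i) = μ := hlamF μ i h
    rw [hFval μ (F μ i) h']
    have : (⟨F μ i, h'⟩ : {j // lam j = μ}) = f μ ⟨i, h⟩ := by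
      apply Subtype.ext; exact hFval μ i h
    rw [this, hf1 μ]
  set σ : Fin R → Fin R := fun i => F (lam i) i with hσdef
  have hσlam : ∀ i, lam (σ i) = lam i := fun i => hlamF (lam i) i rfl
  have hσσ : ∀ i, σ (σ i) = i := by
    intro i
    show F (lam (σ i)) (σ i) = i
    rw [hσlam i]
    exact hFF (lam i) i rfl
  have hσne : ∀ i, lam i ≠ 0 → σ i ≠ i := by
    intro i h0 hfix
    have : (⟨σ i, hσlam i⟩ : {j // lam j = lam i}) = ⟨i, rfl⟩ := by
      apply Subtype.ext; exact hfix
    have heq : σ i = (f (lam i) ⟨i, rfl⟩).1 := hFval (lam i) i rfl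
    exact hf2 (lam i) h0 ⟨i, rfl⟩ (by
      apply Subtype.ext
      simpa [heq] using hfix)
  have hfix0 : ∀ i, σ i = i → lam i = 0 := by
    intro i h
    by_contra h0
    exact hσne i h0 h
  -- coefficients
  set c : Fin R → ℝ := fun i => if i < σ i then Real.sqrt (lam i) else -Real.sqrt (lam i)
    with hcdef
  have hc2 : ∀ i, c i ^ 2 = lam i := by
    intro i
    by_cases h : i < σ i <;> simp [hcdef, h, Real.sq_sqrt (hnn i)]
  have hcσ : ∀ i, c (σ i) = - c i := by
    intro i
    by_cases h : σ i = i
    · have h0 : lam i = 0 := hfix0 i h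
      simp [hcdef, h, h0, lt_irrefl]
    · rcases lt_or_gt_of_ne (Ne.symm h) with h1 | h1
      · -- i < σ i
        have h2 : ¬ σ i < σ (σ i) := by rw [hσσ i]; exact not_lt.2 h1.le
        simp [hcdef, h1, h2, hσlam i]
      · -- σ i < i
        have h2 : σ i < σ (σ i) := by rw [hσσ i]; exact h1
        simp [hcdef, h1, h2, hσlam i, not_lt.2 h1.le]
  -- the unitary of eigenvectors
  set U : Matrix (Fin R) (Fin R) ℂ := (hH.eigenvectorUnitary : Matrix (Fin R) (Fin R) ℂ)
    with hUdef
  have hUU : star U * U = 1 := by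
    simpa [hUdef] using congrArg Subtype.val (unitary.star_mul_self hH.eigenvectorUnitary)
  have horth : ∀ p q : Fin R, (∑ j, U j p * (starRingEnd ℂ) (U j q))
      = if p = q then 1 else 0 := by
    intro p q
    have h1 := congrFun (congrFun hUU q) p
    simp only [Matrix.mul_apply, Matrix.star_apply, Matrix.one_apply] at h1
    rw [if_congr (eq_comm (a := p) (b := q)) rfl rfl, ← h1]
    exact Finset.sum_congr rfl fun j _ => mul_comm _ _
  have hspec : ∀ a b : Fin R, γ a b = ∑ k, U a k * (lam k : ℂ) * (starRingEnd ℂ) (U b k) := by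
    intro a b
    have h1 := congrFun (congrFun hH.spectral_theorem a) b
    rw [h1, Unitary.conjStarAlgAut_apply, Matrix.mul_apply]
    apply Finset.sum_congr rfl; intro k _
    rw [Matrix.mul_diagonal, Matrix.star_apply]
    norm_num [RCLike.star_def, RCLike.ofReal_alg]
    simp [hUdef, hlamdef]
  -- the wavefunction
  set x : Fin R → Fin R → ℂ := fun a b => ∑ i, (c i : ℂ) * (U a i * U b (σ i)) with hxdef
  have σE : Function.Bijective σ := (Function.Involutive.toPerm σ hσσ).bijective
  have hanti : ∀ i j, x i j = - x j i := by
    intro a b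
    have hre := Equiv.sum_comp (Function.Involutive.toPerm σ hσσ)
      (fun i => (c i : ℂ) * (U b i * U a (σ i)))
    change ∑ i, (c (σ i) : ℂ) * (U b (σ i) * U a (σ (σ i))) = _ at hre
    show (∑ i, (c i : ℂ) * (U a i * U b (σ i)))
        = -∑ i, (c i : ℂ) * (U b i * U a (σ i))
    rw [← hre, ← Finset.sum_neg_distrib]
    apply Finset.sum_congr rfl
    intro i _
    rw [hcσ i, hσσ i]
    push_cast
    ring
  have hrep : ∀ a b, γ a b = ∑ j, x a j * (starRingEnd ℂ) (x b j) := by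
    intro a b
    have expand : ∀ j, x a j * (starRingEnd ℂ) (x b j)
        = ∑ i, ∑ k, ((c i : ℂ) * U a i * ((c k : ℂ) * (starRingEnd ℂ) (U b k)))
            * (U j (σ i) * (starRingEnd ℂ) (U j (σ k))) := by
      intro j
      rw [hxdef]
      simp only [map_sum, map_mul, Finset.sum_mul_sum]
      apply Finset.sum_congr rfl; intro i _
      apply Finset.sum_congr rfl; intro k _
      simp only [Complex.conj_ofReal]
      ring
    symm
    calc ∑ j, x a j * (starRingEnd ℂ) (x b j)
        = ∑ i, ∑ k, ((c i : ℂ) * U a i * ((c k : ℂ) * (starRingEnd ℂ) (U b k)))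
            * ∑ j, U j (σ i) * (starRingEnd ℂ) (U j (σ k)) := by
          rw [Finset.sum_congr rfl fun j _ => expand j]
          rw [Finset.sum_comm]
          apply Finset.sum_congr rfl; intro i _
          rw [Finset.sum_comm]
          apply Finset.sum_congr rfl; intro k _
          rw [Finset.mul_sum]
      _ = ∑ i, (lam i : ℂ) * (U a i * (starRingEnd ℂ) (U b i)) := by
          apply Finset.sum_congr rfl; intro i _
          rw [Finset.sum_eq_single i
            (fun k _ hk => by
              rw [horth (σ i) (σ k), if_neg (fun h => hk (σE.1 h).symm), mul_zero])
            (fun h => absurd (Finset.mem_univ i) h)]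
          rw [horth (σ i) (σ i), if_pos rfl, mul_one]
          have hcc : ((c i : ℂ)) * ((c i : ℂ)) = (lam i : ℂ) := by
            rw [← Complex.ofReal_mul, ← sq, hc2 i]
          calc (c i : ℂ) * U a i * ((c i : ℂ) * (starRingEnd ℂ) (U b i))
              = ((c i : ℂ) * (c i : ℂ)) * (U a i * (starRingEnd ℂ) (U b i)) := by ring
            _ = (lam i : ℂ) * (U a i * (starRingEnd ℂ) (U b i)) := by rw [hcc]
      _ = γ a b := by
          rw [hspec a b]
          apply Finset.sum_congr rfl; intro k _
          ring
  refine ⟨x, hanti, ?_, hrep⟩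
  -- normalization from the trace
  have hdiag : ∀ a, γ a a = ∑ j, ((‖x a j‖ ^ 2 : ℝ) : ℂ) := by
    intro a
    rw [hrep a a]
    apply Finset.sum_congr rfl; intro j _
    rw [Complex.mul_conj]
    rw [Complex.sq_norm]
  have htr2 : ∑ a, γ a a = 2 := by rw [← htr]; simp [Matrix.trace, Matrix.diag]
  have hsum : ∑ a, ∑ j, ((‖x a j‖ ^ 2 : ℝ) : ℂ) = 2 := by
    rw [← htr2]; exact Finset.sum_congr rfl fun a _ => (hdiag a).symm
  exact_mod_cast hsum
end

section
/- Let R = 2m be even, let λ₁ ≥ λ₂ ≥ … ≥ λ_R ≥ 0 with λ_{2k−1} = λ_{2k} > λ_{2k+1} for every k (strict inequality between consecutive pairs, where λ_{R+1} is taken to be a value below λ_R if all pairs are nonzero), and let x : Fin R → Fin R → ℂ be antisymmetric with ∑_{i,j} |x i j|² = 2 whose one-particle reduced density matrix γ a b = ∑_j (x a j) * conj (x b j) equals the diagonal matrix diag(λ₁, …, λ_R). Then x i j = 0 unless {i, j} = {2k−1, 2k} for some k, and |x (2k−1) (2k)|² = λ_{2k} for every k; that is, the pre-image of γ must have the Slater-determinant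 form Ψ = ∑_k e^{iθ_k} √λ_{2k} [φ_{2k−1}, φ_{2k}] in the eigenbasis of γ. -/
/-- **Coleman's theorem on 2-fermion pre-images (uniqueness of form).**
Let `R = 2m`, let `λ` be non-increasing and nonnegative with doubly degenerate
pairs `λ_{2k-1} = λ_{2k}` (0-based: `lam (2k) = lam (2k+1)`) and strict inequality
between consecutive pairs, and let `x` be an antisymmetric normalized 2-fermion
wavefunction whose one-particle reduced density matrix is `diag (λ)`.  Then `x`
vanishes off the pair positions `{2k-1, 2k}` and `|x (2k-1) (2k)|² = λ_{2k}`: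
the pre-image is `Ψ = ∑ₖ e^{iθₖ} √λ_{2k} [φ_{2k-1}, φ_{2k}]`. -/
theorem two_fermion_preimage_form
    (m : ℕ) (hm : 0 < m)
    (lam : Fin (2 * m) → ℝ)
    (hpos : ∀ k, 0 ≤ lam k)
    (hmono : ∀ i j : Fin (2 * m), i ≤ j → lam j ≤ lam i)
    (hpair : ∀ k : Fin m, lam ⟨2 * k.1, by have := k.2; omega⟩
        = lam ⟨2 * k.1 + 1, by have := k.2; omega⟩)
    (hstrict : ∀ k : Fin m, ∀ h : k.1 + 1 < m,
        lam ⟨2 * k.1 + 2, by omega⟩ < lam ⟨2 * k.1 + 1, by have := k.2; omega⟩)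
    (x : Fin (2 * m) → Fin (2 * m) → ℂ)
    (hx : ∀ i j, x i j = - x j i)
    (hnorm : ∑ i, ∑ j, ‖x i j‖ ^ 2 = 2)
    (hγ : ∀ a b, ∑ j, x a j * (starRingEnd ℂ) (x b j)
        = Matrix.diagonal (fun i => (lam i : ℂ)) a b) :
    (∀ i j : Fin (2 * m),
      (¬ ∃ k : Fin m, (i = ⟨2 * k.1, by have := k.2; omega⟩ ∧
            j = ⟨2 * k.1 + 1, by have := k.2; omega⟩) ∨
          (i = ⟨2 * k.1 + 1, by have := k.2; omega⟩ ∧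
            j = ⟨2 * k.1, by have := k.2; omega⟩)) → x i j = 0) ∧
    (∀ k : Fin m,
      ‖x ⟨2 * k.1, by have := k.2; omega⟩ ⟨2 * k.1 + 1, by have := k.2; omega⟩‖ ^ 2
        = lam ⟨2 * k.1 + 1, by have := k.2; omega⟩) := by
  -- diagonal entries of x vanish
  have hdiag : ∀ a, x a a = 0 := by
    intro a
    linear_combination (hx a a) / 2
  -- inner sum identity: columns are orthogonal too
  have inner : ∀ k b : Fin (2*m), ∑ j, (starRingEnd ℂ) (x j k) * x j b
      = if b = k then (lam b : ℂ) else 0 := by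
    intro k b
    have h := hγ b k
    rw [Matrix.diagonal_apply] at h
    calc ∑ j, (starRingEnd ℂ) (x j k) * x j b
        = ∑ j, x b j * (starRingEnd ℂ) (x k j) := by
          refine Finset.sum_congr rfl fun j _ => ?_
          rw [hx j k, hx j b, map_neg]; ring
      _ = _ := h
  -- commutation: lam a * x a b = lam b * x a b
  have key : ∀ a b, (lam a : ℂ) * x a b = (lam b : ℂ) * x a b := by
    intro a b
    have e1 : (lam a : ℂ) * x a b
        = ∑ j, Matrix.diagonal (fun i => (lam i : ℂ)) a j * x j b := by
      rw [Finset.sum_eq_single a]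
      · simp
      · intro j _ hj
        rw [Matrix.diagonal_apply_ne _ (Ne.symm hj), zero_mul]
      · simp
    rw [e1]
    calc ∑ j, Matrix.diagonal (fun i => (lam i:ℂ)) a j * x j b
        = ∑ j, (∑ k, x a k * (starRingEnd ℂ) (x j k)) * x j b := by
          refine Finset.sum_congr rfl fun j _ => ?_
          rw [hγ a j]
      _ = ∑ k, x a k * ∑ j, (starRingEnd ℂ) (x j k) * x j b := by
          simp_rw [Finset.sum_mul, Finset.mul_sum]
          rw [Finset.sum_comm]
          refine Finset.sum_congr rfl fun j _ => Finset.sum_congr rfl fun k _ => by ring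
      _ = (lam b : ℂ) * x a b := by
          simp_rw [inner, mul_ite, mul_zero, Finset.sum_ite_eq, Finset.mem_univ, if_true]
          ring
  have hzero : ∀ a b : Fin (2*m), lam a ≠ lam b → x a b = 0 := by
    intro a b hne
    have h2 : ((lam a : ℂ) - lam b) * x a b = 0 := by
      linear_combination key a b
    rcases mul_eq_zero.mp h2 with h3 | h3
    · exfalso; apply hne
      have := sub_eq_zero.mp h3
      exact_mod_cast this
    · exact h3
  -- strict decrease across pairs
  have hlt : ∀ i j : Fin (2*m), i.1 / 2 < j.1 / 2 → lam j < lam i := by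
    intro i j hij
    have hi2 := i.2
    have hj2 := j.2
    have hkm : i.1 / 2 + 1 < m := by omega
    have h1 : lam j ≤ lam ⟨2*(i.1/2)+2, by omega⟩ := by
      refine hmono _ j ?_
      show 2*(i.1/2)+2 ≤ j.1
      omega
    have h2 : lam ⟨2*(i.1/2)+2, by omega⟩ < lam ⟨2*(i.1/2)+1, by omega⟩ :=
      hstrict ⟨i.1/2, by omega⟩ hkm
    have h3 : lam ⟨2*(i.1/2)+1, by omega⟩ ≤ lam i := by
      refine hmono i _ ?_
      show i.1 ≤ 2*(i.1/2)+1
      omega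
    exact lt_of_le_of_lt h1 (lt_of_lt_of_le h2 h3)
  have part1 : ∀ i j : Fin (2 * m),
      (¬ ∃ k : Fin m, (i = ⟨2 * k.1, by have := k.2; omega⟩ ∧
            j = ⟨2 * k.1 + 1, by have := k.2; omega⟩) ∨
          (i = ⟨2 * k.1 + 1, by have := k.2; omega⟩ ∧
            j = ⟨2 * k.1, by have := k.2; omega⟩)) → x i j = 0 := by
    intro i j hnk
    by_cases hij : i = j
    · subst hij; exact hdiag i
    by_cases hl : lam i = lam j
    · have hdiv : i.1/2 = j.1/2 := by
        by_contra hd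
        rcases Nat.lt_or_ge (i.1/2) (j.1/2) with h | h
        · exact absurd hl (ne_of_gt (hlt i j h))
        · have : j.1/2 < i.1/2 := by omega
          exact absurd hl (ne_of_lt (hlt j i this))
      exfalso
      apply hnk
      have hi2 := i.2
      refine ⟨⟨i.1/2, by omega⟩, ?_⟩
      have hij' : i.1 ≠ j.1 := fun h => hij (Fin.ext h)
      have hcase : (i.1 = 2*(i.1/2) ∧ j.1 = 2*(i.1/2)+1)
          ∨ (i.1 = 2*(i.1/2)+1 ∧ j.1 = 2*(i.1/2)) := by omega
      rcases hcase with ⟨h1, h2⟩ | ⟨h1, h2⟩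
      · exact Or.inl ⟨Fin.ext h1, Fin.ext h2⟩
      · exact Or.inr ⟨Fin.ext h1, Fin.ext h2⟩
    · exact hzero i j hl
  refine ⟨part1, ?_⟩
  intro k
  have hk2 := k.2
  set a : Fin (2*m) := ⟨2*k.1, by omega⟩ with ha
  set b : Fin (2*m) := ⟨2*k.1+1, by omega⟩ with hb
  have hγa := hγ a a
  rw [Matrix.diagonal_apply_eq] at hγa
  have hs : ∑ j, x a j * (starRingEnd ℂ) (x a j) = x a b * (starRingEnd ℂ) (x a b) := by
    rw [Finset.sum_eq_single b]
    · intro j _ hj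
      have hxaj : x a j = 0 := by
        apply part1 a j
        rintro ⟨k', ⟨h1, h2⟩ | ⟨h1, h2⟩⟩
        · have hv1 : (2 * k.1 : ℕ) = 2 * k'.1 := congrArg Fin.val h1
          apply hj
          rw [h2]
          apply Fin.ext
          show (2 * k'.1 + 1 : ℕ) = 2 * k.1 + 1
          omega
        · have hv1 : (2 * k.1 : ℕ) = 2 * k'.1 + 1 := congrArg Fin.val h1
          omega
      rw [hxaj, zero_mul]
    · intro hb'; exact absurd (Finset.mem_univ b) hb'
  rw [hs] at hγa
  rw [Complex.mul_conj] at hγa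
  have hre : Complex.normSq (x a b) = lam a := by exact_mod_cast hγa
  have : lam a = lam b := hpair k
  rw [Complex.sq_norm]
  rw [hre, this]
end

section
/- Let N = 2n+1 be odd with n ≥ 1 and let R = N + 2. Let x : (Fin N → Fin R) → ℂ be alternating (x (f ∘ σ) = sign(σ) · x f for every permutation σ of Fin N, and x f = 0 when f is not injective) with ∑_f |x f|² = N!, and let γ be its one-particle reduced density matrix, the R×R matrix with entries γ a b = (1/(N−1)!) ∑_{j : Fin (N−1) → Fin R} x (a ::ᵥ j) * conj (x (b ::ᵥ j)), where a ::ᵥ j denotes prepending a. Suppose γ is invertible (rank R = N+2). Then, listing the eigenvalues λ₁ ≥ λ₂ ≥ … ≥ λ_{N+2} of γ in non-increasing order, λ₁ = 1 and λ_{2k} = λ_{2k+1} for k = 1, …, (N+1)/2 (the remaining eigenvalues are doubly degenerate). -/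
namespace Coleman

open Finset Function Equiv Matrix

noncomputable def esign {R : ℕ} (f : Fin R → Fin R) : ℂ :=
  if h : Function.Bijective f then ((Equiv.Perm.sign (Equiv.ofBijective f h) : ℤ) : ℂ) else 0

theorem esign_comp {R : ℕ} (f : Fin R → Fin R) (σ : Equiv.Perm (Fin R)) :
    esign (f ∘ σ) = ((Equiv.Perm.sign σ : ℤ) : ℂ) * esign f := by
  by_cases h : Function.Bijective f
  · have h2 : Function.Bijective (f ∘ σ) := h.comp σ.bijective
    have : Equiv.ofBijective (f ∘ σ) h2 = Equiv.ofBijective f h * σ := by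
      ext i; rfl
    rw [esign, esign, dif_pos h2, dif_pos h, this, _root_.map_mul]
    push_cast
    ring
  · have h2 : ¬ Function.Bijective (f ∘ σ) := by
      intro hc
      have h3 := hc.comp σ.symm.bijective
      have e : (f ∘ σ) ∘ σ.symm = f := by ext i; simp
      rw [e] at h3
      exact h h3
    rw [esign, esign, dif_neg h2, dif_neg h, mul_zero]

theorem esign_eq_zero {R : ℕ} {f : Fin R → Fin R} (h : ¬ Function.Bijective f) : esign f = 0 :=
  dif_neg h

theorem esign_conj {R : ℕ} (f : Fin R → Fin R) : (starRingEnd ℂ) (esign f) = esign f := by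
  rw [esign]
  split
  · rcases Int.units_eq_one_or (Equiv.Perm.sign (Equiv.ofBijective f ‹_›)) with h | h <;>
      simp [h]
  · simp

theorem esign_mul_self {R : ℕ} {f : Fin R → Fin R} (h : Function.Bijective f) :
    esign f * esign f = 1 := by
  rw [esign, dif_pos h]
  rcases Int.units_eq_one_or (Equiv.Perm.sign (Equiv.ofBijective f h)) with h | h <;> simp [h]

theorem sign_sq {m : ℕ} (σ : Equiv.Perm (Fin m)) :
    ((Equiv.Perm.sign σ : ℤ) : ℂ) * ((Equiv.Perm.sign σ : ℤ) : ℂ) = 1 := by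
  rcases Int.units_eq_one_or (Equiv.Perm.sign σ) with h | h <;> simp [h]

/-- lift a permutation of `Fin m` to one of `Fin (m+1)` fixing `0`. -/
noncomputable def liftPerm {m : ℕ} (σ : Equiv.Perm (Fin m)) : Equiv.Perm (Fin (m + 1)) :=
  Equiv.Perm.decomposeFin.symm (0, σ)

@[simp] theorem liftPerm_zero {m : ℕ} (σ : Equiv.Perm (Fin m)) : liftPerm σ 0 = 0 :=
  Equiv.Perm.decomposeFin_symm_apply_zero 0 σ

@[simp] theorem liftPerm_succ {m : ℕ} (σ : Equiv.Perm (Fin m)) (i : Fin m) :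
    liftPerm σ i.succ = (σ i).succ := by
  simp [liftPerm]

@[simp] theorem liftPerm_sign {m : ℕ} (σ : Equiv.Perm (Fin m)) :
    Equiv.Perm.sign (liftPerm σ) = Equiv.Perm.sign σ := by
  simp [liftPerm]

theorem cons_comp_liftPerm {m : ℕ} {α : Type*} (a : α) (g : Fin m → α) (σ : Equiv.Perm (Fin m)) :
    (Matrix.vecCons a g) ∘ (liftPerm σ) = Matrix.vecCons a (g ∘ σ) := by
  funext i
  refine Fin.cases ?_ (fun j => ?_) i <;> simp


theorem vecCons_injective_iff {m : ℕ} {α : Type*} {a : α} {u : Fin m → α} :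
    Injective (Matrix.vecCons a u) ↔ a ∉ Set.range u ∧ Injective u :=
  Fin.cons_injective_iff

theorem exists_comp_perm {m : ℕ} {α : Type*} (g g' : Fin m → α)
    (hg : Injective g) (hg' : Injective g') (hr : Set.range g = Set.range g') :
    ∃ σ : Equiv.Perm (Fin m), g' = g ∘ σ := by
  refine ⟨(Equiv.ofInjective g' hg').trans ((Equiv.setCongr hr.symm).trans
    (Equiv.ofInjective g hg).symm), ?_⟩
  funext i
  simp only [Function.comp_apply, Equiv.trans_apply, Equiv.setCongr_apply]
  rw [Equiv.apply_ofInjective_symm hg]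
  rfl

theorem range_cons_inj {m : ℕ} {α : Type*} {a : α} {u u' : Fin m → α}
    (hu : Injective (Matrix.vecCons a u)) (hu' : Injective (Matrix.vecCons a u'))
    (hr : Set.range (Matrix.vecCons a u) = Set.range (Matrix.vecCons a u')) :
    Set.range u = Set.range u' := by
  have h1 := (vecCons_injective_iff.mp hu).1
  have h2 := (vecCons_injective_iff.mp hu').1
  have e1 : Set.range u = Set.range (Matrix.vecCons a u) \ {a} := by
    rw [Matrix.range_cons]
    rw [Set.union_comm]
    rw [Set.union_singleton, Set.insert_diff_self_of_notMem h1]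
  have e2 : Set.range u' = Set.range (Matrix.vecCons a u') \ {a} := by
    rw [Matrix.range_cons, Set.union_comm, Set.union_singleton,
      Set.insert_diff_self_of_notMem h2]
  rw [e1, e2, hr]

/-- sum over a `Perm`-torsor of functions. -/
theorem sum_perm_torsor {m : ℕ} {α : Type*} [Fintype α] [DecidableEq α]
    (Q : (Fin m → α) → Prop) [DecidablePred Q]
    (F : (Fin m → α) → ℂ)
    (hcomp : ∀ g (σ : Equiv.Perm (Fin m)), Q g → Q (g ∘ σ))
    (hinj : ∀ g, Q g → Injective g)
    (hrange : ∀ g g', Q g → Q g' → Set.range g = Set.range g')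
    (hF : ∀ g (σ : Equiv.Perm (Fin m)), Q g → F (g ∘ σ) = F g)
    (hvan : ∀ g, ¬ Q g → F g = 0)
    (g₀ : Fin m → α) (h₀ : Q g₀) :
    ∑ g, F g = (m.factorial : ℂ) * F g₀ := by
  have htor : ∀ g, Q g → ∃ σ : Equiv.Perm (Fin m), g = g₀ ∘ σ := fun g hq =>
    exists_comp_perm g₀ g (hinj _ h₀) (hinj _ hq) (hrange _ _ h₀ hq)
  classical
  have h1 : ∑ g ∈ Finset.univ.filter Q, F g = ∑ g, F g :=
    Finset.sum_filter_of_ne (by intro g _ h; by_contra hq; exact h (hvan g hq))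
  have h2 : ∑ σ : Equiv.Perm (Fin m), F (g₀ ∘ σ) = ∑ g ∈ Finset.univ.filter Q, F g := by
    refine Finset.sum_bij (fun (σ : Equiv.Perm (Fin m)) _ => g₀ ∘ σ) ?_ ?_ ?_ ?_
    · intro σ _; simp only [Finset.mem_filter, Finset.mem_univ, true_and]
      exact hcomp g₀ σ h₀
    · intro σ _ τ _ h
      exact Equiv.ext fun i => hinj g₀ h₀ (congrFun h i)
    · intro g hg
      simp only [Finset.mem_filter, Finset.mem_univ, true_and] at hg
      obtain ⟨σ, rfl⟩ := htor g hg
      exact ⟨σ, Finset.mem_univ _, rfl⟩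
    · intro σ _; rfl
  have h3 : ∑ σ : Equiv.Perm (Fin m), F (g₀ ∘ σ) = (m.factorial : ℂ) * F g₀ := by
    rw [Finset.sum_congr rfl (fun σ _ => hF g₀ σ h₀), Finset.sum_const, Finset.card_univ,
      Fintype.card_perm, Fintype.card_fin, nsmul_eq_mul]
  rw [← h1, ← h2, h3]

theorem card_perm_torsor {m : ℕ} {α : Type*} [Fintype α] [DecidableEq α]
    (Q : (Fin m → α) → Prop) [DecidablePred Q]
    (hcomp : ∀ g (σ : Equiv.Perm (Fin m)), Q g → Q (g ∘ σ))
    (hinj : ∀ g, Q g → Injective g)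
    (hrange : ∀ g g', Q g → Q g' → Set.range g = Set.range g')
    (g₀ : Fin m → α) (h₀ : Q g₀) :
    (Finset.univ.filter Q).card = m.factorial := by
  have := sum_perm_torsor Q (fun g => if Q g then (1:ℂ) else 0) hcomp hinj hrange
    (by intro g σ hq
        show (if Q (g ∘ σ) then (1:ℂ) else 0) = if Q g then 1 else 0
        rw [if_pos (hcomp g σ hq), if_pos hq])
    (by intro g hq
        show (if Q g then (1:ℂ) else 0) = 0
        rw [if_neg hq]) g₀ h₀
  rw [if_pos h₀, mul_one, Finset.sum_boole] at this
  exact_mod_cast this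

theorem exists_ordering {α : Type*} [DecidableEq α] [Fintype α] (T : Finset α) (m : ℕ)
    (h : T.card = m) : ∃ j : Fin m → α, Injective j ∧ Set.range j = ↑T := by
  have hc : Fintype.card {x // x ∈ T} = m := by simp [h]
  obtain e := (Fintype.equivFinOfCardEq hc).symm
  refine ⟨Subtype.val ∘ e, Subtype.val_injective.comp e.injective, ?_⟩
  ext a
  simp [Set.range_comp]


section Wave

variable {M : ℕ}

/-- the dual (hole) state coefficient matrix -/
noncomputable def Amat (x : (Fin (M + 1) → Fin (M + 3)) → ℂ) (a b : Fin (M + 3)) : ℂ :=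
  (1 / ((M + 1).factorial : ℂ)) * ∑ g : Fin (M + 1) → Fin (M + 3),
    esign (Matrix.vecCons a (Matrix.vecCons b g)) * x g

theorem bij_iff_inj {R : ℕ} (f : Fin R → Fin R) : Function.Bijective f ↔ Injective f :=
  (Finite.injective_iff_bijective).symm

variable (x : (Fin (M + 1) → Fin (M + 3)) → ℂ)
variable (halt : ∀ (σ : Equiv.Perm (Fin (M + 1))) (f : Fin (M + 1) → Fin (M + 3)),
    x (f ∘ σ) = ((Equiv.Perm.sign σ : ℤ) : ℂ) * x f)
variable (hvanish : ∀ f, ¬ Injective f → x f = 0)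

section Q2

variable (a b : Fin (M + 3))

private def Q2 (a b : Fin (M + 3)) (g : Fin (M + 1) → Fin (M + 3)) : Prop :=
  Function.Bijective (Matrix.vecCons a (Matrix.vecCons b g))

instance : DecidablePred (Q2 a b) := fun g => by unfold Q2; infer_instance

theorem Q2_comp (g : Fin (M + 1) → Fin (M + 3)) (σ : Equiv.Perm (Fin (M + 1)))
    (h : Q2 a b g) : Q2 a b (g ∘ σ) := by
  unfold Q2 at *
  rw [← cons_comp_liftPerm, ← cons_comp_liftPerm]
  exact h.comp (liftPerm (liftPerm σ)).bijective

theorem Q2_inj (g : Fin (M + 1) → Fin (M + 3)) (h : Q2 a b g) : Injective g :=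
  (vecCons_injective_iff.mp (vecCons_injective_iff.mp h.injective).2).2

theorem Q2_range (g g' : Fin (M + 1) → Fin (M + 3)) (h : Q2 a b g) (h' : Q2 a b g') :
    Set.range g = Set.range g' := by
  have r1 : Set.range (Matrix.vecCons b g) = Set.range (Matrix.vecCons b g') := by
    refine range_cons_inj h.injective h'.injective ?_
    rw [h.surjective.range_eq, h'.surjective.range_eq]
  exact range_cons_inj (vecCons_injective_iff.mp h.injective).2
    (vecCons_injective_iff.mp h'.injective).2 r1

theorem Q2_exists (hab : a ≠ b) : ∃ g₀, Q2 a b g₀ := by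
  obtain ⟨j, hj, hr⟩ := exists_ordering ({a, b}ᶜ : Finset (Fin (M + 3))) (M + 1)
    (by rw [Finset.card_compl, Finset.card_insert_of_notMem (by simpa), Finset.card_singleton]
        simp)
  refine ⟨j, (bij_iff_inj _).mpr ?_⟩
  have hb : b ∉ Set.range j := by rw [hr]; simp
  have ha : a ∉ Set.range j := by rw [hr]; simp
  rw [vecCons_injective_iff, vecCons_injective_iff, Matrix.range_cons]
  refine ⟨?_, hb, hj⟩
  simp only [Set.mem_union, Set.mem_singleton_iff]
  tauto

include halt in
theorem Amat_eq (g₀ : Fin (M + 1) → Fin (M + 3)) (h₀ : Q2 a b g₀) :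
    Amat x a b = esign (Matrix.vecCons a (Matrix.vecCons b g₀)) * x g₀ := by
  classical
  unfold Amat
  rw [sum_perm_torsor (Q2 a b) _ (Q2_comp a b) (Q2_inj a b) (Q2_range a b) ?_ ?_ g₀ h₀]
  · rw [← mul_assoc, one_div, inv_mul_cancel₀ (by exact_mod_cast (M + 1).factorial_ne_zero),
      one_mul]
  · intro g σ hq
    rw [← cons_comp_liftPerm, ← cons_comp_liftPerm, esign_comp, halt,
      liftPerm_sign, liftPerm_sign]
    have h2 := sign_sq σ
    ring_nf
    rw [sq, h2, one_mul]
  · intro g hq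
    rw [esign_eq_zero hq, zero_mul]

end Q2

theorem Amat_diag (a : Fin (M + 3)) : Amat x a a = 0 := by
  unfold Amat
  rw [Finset.sum_eq_zero, mul_zero]
  intro g _
  rw [esign_eq_zero, zero_mul]
  intro hbij
  have := vecCons_injective_iff.mp hbij.injective
  exact this.1 (by rw [Matrix.range_cons]; simp)

theorem Amat_skew (a b : Fin (M + 3)) : Amat x b a = - Amat x a b := by
  have h : ∀ g : Fin (M + 1) → Fin (M + 3),
      esign (Matrix.vecCons b (Matrix.vecCons a g)) =
      - esign (Matrix.vecCons a (Matrix.vecCons b g)) := by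
    intro g
    have hcomp : Matrix.vecCons b (Matrix.vecCons a g) =
        (Matrix.vecCons a (Matrix.vecCons b g)) ∘ (Equiv.swap 0 1) := by
      funext i
      refine Fin.cases ?_ (fun j => ?_) i
      · simp [Equiv.swap_apply_left]
      · refine Fin.cases ?_ (fun k => ?_) j
        · rw [Function.comp_apply, Fin.succ_zero_eq_one, Equiv.swap_apply_right]
          simp
        · rw [Function.comp_apply, Equiv.swap_apply_of_ne_of_ne]
          · simp
          · exact Fin.succ_ne_zero _
          · rw [← Fin.succ_zero_eq_one]
            exact fun h => Fin.succ_ne_zero _ (Fin.succ_injective _ h)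
    rw [hcomp, esign_comp, Equiv.Perm.sign_swap (by simp [Fin.ext_iff]), Units.val_neg,
      Units.val_one]
    push_cast
    ring
  unfold Amat
  rw [Finset.sum_congr rfl (fun g _ => by rw [h g, neg_mul]), Finset.sum_neg_distrib]
  ring


theorem inj2_iff {m : ℕ} {a b : Fin (M + 3)} {g : Fin m → Fin (M + 3)} :
    Injective (Matrix.vecCons a (Matrix.vecCons b g)) ↔
      (a ≠ b ∧ a ∉ Set.range g) ∧ b ∉ Set.range g ∧ Injective g := by
  simp only [vecCons_injective_iff, Matrix.range_cons, Set.mem_union, Set.mem_singleton_iff,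
    not_or]
  try tauto

theorem inj3_iff {m : ℕ} {a b c : Fin (M + 3)} {j : Fin m → Fin (M + 3)} :
    Injective (Matrix.vecCons a (Matrix.vecCons b (Matrix.vecCons c j))) ↔
      (a ≠ b ∧ a ≠ c ∧ a ∉ Set.range j) ∧ (b ≠ c ∧ b ∉ Set.range j) ∧
        c ∉ Set.range j ∧ Injective j := by
  simp only [vecCons_injective_iff, Matrix.range_cons, Set.mem_union, Set.mem_singleton_iff,
    not_or]
  try tauto

section Q3

variable (a b c : Fin (M + 3))

private def Q3 (a b c : Fin (M + 3)) (j : Fin M → Fin (M + 3)) : Prop :=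
  Function.Bijective
    (Matrix.vecCons a (Matrix.vecCons b (Matrix.vecCons c j)))

instance : DecidablePred (Q3 a b c) := fun j => by unfold Q3; infer_instance

theorem Q3_comp (j : Fin M → Fin (M + 3)) (σ : Equiv.Perm (Fin M))
    (h : Q3 a b c j) : Q3 a b c (j ∘ σ) := by
  unfold Q3 at *
  rw [← cons_comp_liftPerm, ← cons_comp_liftPerm, ← cons_comp_liftPerm]
  exact h.comp (liftPerm (liftPerm (liftPerm σ))).bijective

theorem Q3_inj (j : Fin M → Fin (M + 3)) (h : Q3 a b c j) : Injective j :=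
  (inj3_iff.mp h.injective).2.2.2

theorem Q3_range (j j' : Fin M → Fin (M + 3)) (h : Q3 a b c j) (h' : Q3 a b c j') :
    Set.range j = Set.range j' := by
  have r1 : Set.range (Matrix.vecCons b (Matrix.vecCons c j))
      = Set.range (Matrix.vecCons b (Matrix.vecCons c j')) := by
    refine range_cons_inj h.injective h'.injective ?_
    rw [h.surjective.range_eq, h'.surjective.range_eq]
  have r2 : Set.range (Matrix.vecCons c j) = Set.range (Matrix.vecCons c j') :=
    range_cons_inj (vecCons_injective_iff.mp h.injective).2
      (vecCons_injective_iff.mp h'.injective).2 r1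
  exact range_cons_inj (vecCons_injective_iff.mp (vecCons_injective_iff.mp h.injective).2).2
    (vecCons_injective_iff.mp (vecCons_injective_iff.mp h'.injective).2).2 r2

theorem Q3_exists (hab : a ≠ b) (hac : a ≠ c) (hbc : b ≠ c) : ∃ j₀, Q3 a b c j₀ := by
  obtain ⟨j, hj, hr⟩ := exists_ordering ({a, b, c}ᶜ : Finset (Fin (M + 3))) M
    (by rw [Finset.card_compl,
          Finset.card_insert_of_notMem (by simp [hab, hac]),
          Finset.card_insert_of_notMem (by simpa), Finset.card_singleton]
        simp)
  refine ⟨j, (bij_iff_inj _).mpr ?_⟩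
  have ha : a ∉ Set.range j := by rw [hr]; simp
  have hb : b ∉ Set.range j := by rw [hr]; simp
  have hc : c ∉ Set.range j := by rw [hr]; simp
  rw [inj3_iff]
  tauto

end Q3

/-- given an injective `(M+2)`-tuple, there is exactly one remaining value. -/
theorem exists_unique_compl (v : Fin (M + 2) → Fin (M + 3)) (hv : Injective v) :
    ∃! d : Fin (M + 3), d ∉ Set.range v := by
  classical
  have hcard : ((Finset.univ.image v)ᶜ : Finset (Fin (M + 3))).card = 1 := by
    rw [Finset.card_compl, Finset.card_image_of_injective _ hv]
    simp
  obtain ⟨d, hd⟩ := Finset.card_eq_one.mp hcard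
  refine ⟨d, ?_, ?_⟩
  · have : d ∈ (Finset.univ.image v)ᶜ := by rw [hd]; exact Finset.mem_singleton_self d
    rw [Finset.mem_compl, Finset.mem_image] at this
    rintro ⟨k, rfl⟩
    exact this ⟨k, Finset.mem_univ k, rfl⟩
  · intro d' hd'
    have : d' ∈ (Finset.univ.image v)ᶜ := by
      rw [Finset.mem_compl, Finset.mem_image]
      rintro ⟨k, -, rfl⟩
      exact hd' ⟨k, rfl⟩
    rw [hd, Finset.mem_singleton] at this
    exact this

theorem Q3_of_not_mem {a b : Fin (M + 3)} {j : Fin M → Fin (M + 3)}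
    (hj : Injective (Matrix.vecCons a (Matrix.vecCons b j)))
    {c : Fin (M + 3)} (hc : c ∉ Set.range (Matrix.vecCons a (Matrix.vecCons b j))) :
    Q3 a b c j := by
  rw [Matrix.range_cons, Matrix.range_cons, Set.mem_union, Set.mem_union,
    Set.mem_singleton_iff, Set.mem_singleton_iff] at hc
  push_neg at hc
  obtain ⟨hca, hcb, hcj⟩ := hc
  have h2 := inj2_iff.mp hj
  refine (bij_iff_inj _).mpr (inj3_iff.mpr ?_)
  exact ⟨⟨h2.1.1, Ne.symm hca, h2.1.2⟩, ⟨Ne.symm hcb, h2.2.1⟩, hcj, h2.2.2⟩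

theorem Q3_mem (a b : Fin (M + 3)) (j : Fin M → Fin (M + 3)) {c : Fin (M + 3)}
    (h : Q3 a b c j) : c ∉ Set.range (Matrix.vecCons a (Matrix.vecCons b j)) := by
  have h3 := inj3_iff.mp h.injective
  rw [Matrix.range_cons, Matrix.range_cons]
  simp only [Set.mem_union, Set.mem_singleton_iff, not_or]
  exact ⟨Ne.symm h3.1.2.1, Ne.symm h3.2.1.1, h3.2.2.1⟩

theorem Q3_inj2 {a b c : Fin (M + 3)} {j : Fin M → Fin (M + 3)} (h : Q3 a b c j) :
    Injective (Matrix.vecCons a (Matrix.vecCons b j)) := by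
  have h3 := inj3_iff.mp h.injective
  exact inj2_iff.mpr ⟨⟨h3.1.1, h3.1.2.2⟩, h3.2.1.2, h3.2.2.2⟩

theorem Q3_exists_unique {a b : Fin (M + 3)} {j : Fin M → Fin (M + 3)}
    (hj : Injective (Matrix.vecCons a (Matrix.vecCons b j))) :
    ∃! c, Q3 a b c j := by
  obtain ⟨d, hd, hun⟩ := exists_unique_compl (Matrix.vecCons a (Matrix.vecCons b j)) hj
  exact ⟨d, Q3_of_not_mem hj hd, fun c hc => hun c (Q3_mem a b j hc)⟩

/-- same for `Q2`: insertion of missing element at position 1. -/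
theorem Q2_of_not_mem {a : Fin (M + 3)} {g : Fin (M + 1) → Fin (M + 3)}
    (hg : Injective (Matrix.vecCons a g))
    {c : Fin (M + 3)} (hc : c ∉ Set.range (Matrix.vecCons a g)) :
    Q2 a c g := by
  rw [Matrix.range_cons, Set.mem_union, Set.mem_singleton_iff] at hc
  push_neg at hc
  have h2 := vecCons_injective_iff.mp hg
  refine (bij_iff_inj _).mpr (inj2_iff.mpr ?_)
  exact ⟨⟨Ne.symm hc.1, h2.1⟩, hc.2, h2.2⟩

theorem Q2_mem (a : Fin (M + 3)) (g : Fin (M + 1) → Fin (M + 3)) {c : Fin (M + 3)}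
    (h : Q2 a c g) : c ∉ Set.range (Matrix.vecCons a g) := by
  have h2 := inj2_iff.mp h.injective
  rw [Matrix.range_cons]
  simp only [Set.mem_union, Set.mem_singleton_iff, not_or]
  exact ⟨Ne.symm h2.1.1, h2.2.1⟩

theorem Q2_inj1 {a c : Fin (M + 3)} {g : Fin (M + 1) → Fin (M + 3)} (h : Q2 a c g) :
    Injective (Matrix.vecCons a g) := by
  have h2 := inj2_iff.mp h.injective
  exact vecCons_injective_iff.mpr ⟨h2.1.2, h2.2.2⟩

theorem Q2_exists_unique {a : Fin (M + 3)} {g : Fin (M + 1) → Fin (M + 3)}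
    (hg : Injective (Matrix.vecCons a g)) :
    ∃! c, Q2 a c g := by
  obtain ⟨d, hd, hun⟩ := exists_unique_compl (Matrix.vecCons a g) hg
  exact ⟨d, Q2_of_not_mem hg hd, fun c hc => hun c (Q2_mem a g hc)⟩


theorem swap02_eq {a b c : Fin (M + 3)} (j : Fin M → Fin (M + 3)) :
    Matrix.vecCons b (Matrix.vecCons c (Matrix.vecCons a j)) =
      (Matrix.vecCons a (Matrix.vecCons c (Matrix.vecCons b j))) ∘
        (Equiv.swap 0 ((0 : Fin (M + 1)).succ.succ)) := by
  funext i
  refine Fin.cases ?_ (fun p => ?_) i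
  · rw [Function.comp_apply, Equiv.swap_apply_left]
    simp
  · refine Fin.cases ?_ (fun q => ?_) p
    · rw [Function.comp_apply, Equiv.swap_apply_of_ne_of_ne (Fin.succ_ne_zero _)
        (fun h => Fin.succ_ne_zero _ (Fin.succ_injective _ h).symm)]
      simp
    · refine Fin.cases ?_ (fun r => ?_) q
      · rw [Function.comp_apply, Equiv.swap_apply_right]
        simp
      · rw [Function.comp_apply, Equiv.swap_apply_of_ne_of_ne (Fin.succ_ne_zero _)
          (fun h => ?_)]
        · simp
        · have h2 := Fin.succ_injective _ (Fin.succ_injective _ h)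
          exact Fin.succ_ne_zero _ h2

theorem offdiag_sign {a b c : Fin (M + 3)} {j : Fin M → Fin (M + 3)} (h : Q3 a b c j) :
    Q2 a c (Matrix.vecCons b j) ∧ Q2 b c (Matrix.vecCons a j) ∧
      esign (Matrix.vecCons a (Matrix.vecCons c (Matrix.vecCons b j))) *
        esign (Matrix.vecCons b (Matrix.vecCons c (Matrix.vecCons a j))) = -1 := by
  obtain ⟨⟨hab, hac, haj⟩, ⟨hbc, hbj⟩, hcj, hjj⟩ := inj3_iff.mp h.injective
  have h1 : Q2 a c (Matrix.vecCons b j) := (bij_iff_inj _).mpr (inj3_iff.mpr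
    ⟨⟨hac, hab, haj⟩, ⟨Ne.symm hbc, hcj⟩, hbj, hjj⟩)
  have h2 : Q2 b c (Matrix.vecCons a j) := (bij_iff_inj _).mpr (inj3_iff.mpr
    ⟨⟨hbc, Ne.symm hab, hbj⟩, ⟨Ne.symm hac, hcj⟩, haj, hjj⟩)
  refine ⟨h1, h2, ?_⟩
  have e2 : esign (Matrix.vecCons b (Matrix.vecCons c (Matrix.vecCons a j))) =
      -esign (Matrix.vecCons a (Matrix.vecCons c (Matrix.vecCons b j))) := by
    rw [swap02_eq (a := a) (b := b) (c := c) j, esign_comp,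
      Equiv.Perm.sign_swap (Ne.symm (Fin.succ_ne_zero _)), Units.val_neg, Units.val_one]
    push_cast
    ring
  rw [e2, mul_neg, esign_mul_self h1]

include halt in
theorem offdiag_term {a b c : Fin (M + 3)} {j : Fin M → Fin (M + 3)} (h : Q3 a b c j) :
    Amat x a c * (starRingEnd ℂ) (Amat x b c) =
      -((starRingEnd ℂ) (x (Matrix.vecCons a j)) * x (Matrix.vecCons b j)) := by
  obtain ⟨h1, h2, hsgn⟩ := offdiag_sign h
  rw [Amat_eq x halt a c (Matrix.vecCons b j) h1, Amat_eq x halt b c (Matrix.vecCons a j) h2]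
  rw [_root_.map_mul, esign_conj]
  calc esign (Matrix.vecCons a (Matrix.vecCons c (Matrix.vecCons b j))) *
        x (Matrix.vecCons b j) *
        (esign (Matrix.vecCons b (Matrix.vecCons c (Matrix.vecCons a j))) *
          (starRingEnd ℂ) (x (Matrix.vecCons a j)))
      = (esign (Matrix.vecCons a (Matrix.vecCons c (Matrix.vecCons b j))) *
          esign (Matrix.vecCons b (Matrix.vecCons c (Matrix.vecCons a j)))) *
          (x (Matrix.vecCons b j) * (starRingEnd ℂ) (x (Matrix.vecCons a j))) := by ring
    _ = -((starRingEnd ℂ) (x (Matrix.vecCons a j)) * x (Matrix.vecCons b j)) := by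
          rw [hsgn]; ring

include halt hvanish in
theorem stepB {a b : Fin (M + 3)} (hab : a ≠ b) (j : Fin M → Fin (M + 3)) :
    (∑ c, if Q3 a b c j then Amat x a c * (starRingEnd ℂ) (Amat x b c) else 0) =
      -((starRingEnd ℂ) (x (Matrix.vecCons a j)) * x (Matrix.vecCons b j)) := by
  classical
  by_cases hj : Injective (Matrix.vecCons a (Matrix.vecCons b j))
  · obtain ⟨c₀, hc₀, hun⟩ := Q3_exists_unique hj
    rw [Finset.sum_eq_single c₀]
    · rw [if_pos hc₀, offdiag_term x halt hc₀]
    · intro c _ hne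
      rw [if_neg (fun hc => hne (hun c hc))]
    · intro h; exact absurd (Finset.mem_univ c₀) h
  · have rhs0 : (starRingEnd ℂ) (x (Matrix.vecCons a j)) * x (Matrix.vecCons b j) = 0 := by
      rw [inj2_iff] at hj
      push_neg at hj
      by_cases hjj : Injective j
      · by_cases haj : a ∈ Set.range j
        · have : x (Matrix.vecCons a j) = 0 := hvanish _ (by
            rw [vecCons_injective_iff]; tauto)
          rw [this, map_zero, zero_mul]
        · have hbj : b ∈ Set.range j := by tauto
          have : x (Matrix.vecCons b j) = 0 := hvanish _ (by
            rw [vecCons_injective_iff]; tauto)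
          rw [this, mul_zero]
      · have : x (Matrix.vecCons b j) = 0 := hvanish _ (by
          rw [vecCons_injective_iff]; tauto)
        rw [this, mul_zero]
    rw [rhs0, neg_zero]
    refine Finset.sum_eq_zero fun c _ => ?_
    rw [if_neg (fun hc => hj (Q3_inj2 hc))]

include halt in
theorem stepA {a b : Fin (M + 3)} (hab : a ≠ b) :
    ∑ c, Amat x a c * (starRingEnd ℂ) (Amat x b c) =
      (1 / (M.factorial : ℂ)) * ∑ c, ∑ j : Fin M → Fin (M + 3),
        (if Q3 a b c j then Amat x a c * (starRingEnd ℂ) (Amat x b c) else 0) := by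
  classical
  rw [Finset.mul_sum]
  refine Finset.sum_congr rfl fun c _ => ?_
  by_cases hca : c = a
  · subst hca
    rw [Amat_diag, zero_mul]
    rw [Finset.sum_eq_zero, mul_zero]
    intro jj _
    rw [if_neg]
    intro hq
    exact (inj3_iff.mp hq.injective).1.2.1 rfl
  · by_cases hcb : c = b
    · subst hcb
      rw [Amat_diag, map_zero, mul_zero, Finset.sum_eq_zero, mul_zero]
      intro jj _
      rw [if_neg]
      intro hq
      exact (inj3_iff.mp hq.injective).2.1.1 rfl
    · obtain ⟨j₀, hj₀⟩ := Q3_exists a b c hab (Ne.symm hca) (Ne.symm hcb)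
      rw [← Finset.sum_filter, Finset.sum_const,
        card_perm_torsor (Q3 a b c) (Q3_comp a b c) (Q3_inj a b c) (Q3_range a b c) j₀ hj₀,
        nsmul_eq_mul, ← mul_assoc, one_div, inv_mul_cancel₀
          (by exact_mod_cast M.factorial_ne_zero), one_mul]

include halt hvanish in
theorem entry_offdiag {a b : Fin (M + 3)} (hab : a ≠ b) :
    ∑ c, Amat x a c * (starRingEnd ℂ) (Amat x b c) =
      -((1 / (M.factorial : ℂ)) * ∑ j : Fin M → Fin (M + 3),
        (starRingEnd ℂ) (x (Matrix.vecCons a j)) * x (Matrix.vecCons b j)) := by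
  classical
  rw [stepA x halt hab, Finset.sum_comm,
    Finset.sum_congr rfl (fun j _ => stepB x halt hvanish hab j),
    Finset.sum_neg_distrib, mul_neg]


theorem sum_cons_eq {α : Type*} [Fintype α] [DecidableEq α] {m : ℕ} (a : α)
    (F : (Fin (m + 1) → α) → ℂ) :
    (∑ g : Fin (m + 1) → α, if g 0 = a then F g else 0) =
      ∑ j : Fin m → α, F (Matrix.vecCons a j) := by
  classical
  rw [← Finset.sum_filter]
  refine Finset.sum_nbij' (fun g => g ∘ Fin.succ) (fun j => Matrix.vecCons a j)
    ?_ ?_ ?_ ?_ ?_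
  · intro g _; exact Finset.mem_univ _
  · intro j _
    simp only [Finset.mem_filter, Finset.mem_univ, true_and]
    simp
  · intro g hg
    simp only [Finset.mem_filter, Finset.mem_univ, true_and] at hg
    funext i
    refine Fin.cases ?_ (fun k => ?_) i
    · simp [hg]
    · simp
  · intro j _
    funext i
    simp
  · intro g hg
    simp only [Finset.mem_filter, Finset.mem_univ, true_and] at hg
    congr 1
    funext i
    refine Fin.cases ?_ (fun k => ?_) i
    · simp [hg]
    · simp

include halt in
theorem wg_comp (g : Fin (M + 1) → Fin (M + 3)) (σ : Equiv.Perm (Fin (M + 1))) :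
    x (g ∘ σ) * (starRingEnd ℂ) (x (g ∘ σ)) = x g * (starRingEnd ℂ) (x g) := by
  rw [halt, _root_.map_mul]
  have hconj : (starRingEnd ℂ) ((Equiv.Perm.sign σ : ℤ) : ℂ) = ((Equiv.Perm.sign σ : ℤ) : ℂ) :=
    map_intCast (starRingEnd ℂ) _
  rw [hconj]
  have h2 := sign_sq σ
  ring_nf
  rw [sq, h2, one_mul]

include halt in
theorem diag_key {a c : Fin (M + 3)} {g : Fin (M + 1) → Fin (M + 3)} (h : Q2 a c g) :
    Amat x a c * (starRingEnd ℂ) (Amat x a c) = x g * (starRingEnd ℂ) (x g) := by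
  rw [Amat_eq x halt a c g h, _root_.map_mul, esign_conj]
  calc esign (Matrix.vecCons a (Matrix.vecCons c g)) * x g *
      (esign (Matrix.vecCons a (Matrix.vecCons c g)) * (starRingEnd ℂ) (x g))
      = (esign (Matrix.vecCons a (Matrix.vecCons c g)) *
          esign (Matrix.vecCons a (Matrix.vecCons c g))) *
          (x g * (starRingEnd ℂ) (x g)) := by ring
    _ = x g * (starRingEnd ℂ) (x g) := by rw [esign_mul_self h, one_mul]

include halt in
theorem stepB_diag (a : Fin (M + 3)) (g : Fin (M + 1) → Fin (M + 3)) :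
    (∑ c, if Q2 a c g then Amat x a c * (starRingEnd ℂ) (Amat x a c) else 0) =
      (if Injective (Matrix.vecCons a g) then x g * (starRingEnd ℂ) (x g) else 0) := by
  classical
  by_cases hg : Injective (Matrix.vecCons a g)
  · obtain ⟨c₀, hc₀, hun⟩ := Q2_exists_unique hg
    rw [Finset.sum_eq_single c₀]
    · rw [if_pos hc₀, if_pos hg, diag_key x halt hc₀]
    · intro c _ hne
      rw [if_neg (fun hc => hne (hun c hc))]
    · intro h; exact absurd (Finset.mem_univ c₀) h
  · rw [if_neg hg]
    refine Finset.sum_eq_zero fun c _ => ?_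
    rw [if_neg (fun hc => hg (Q2_inj1 hc))]

include halt in
theorem stepA_diag (a : Fin (M + 3)) :
    ∑ c, Amat x a c * (starRingEnd ℂ) (Amat x a c) =
      (1 / ((M + 1).factorial : ℂ)) * ∑ c, ∑ g : Fin (M + 1) → Fin (M + 3),
        (if Q2 a c g then Amat x a c * (starRingEnd ℂ) (Amat x a c) else 0) := by
  classical
  rw [Finset.mul_sum]
  refine Finset.sum_congr rfl fun c _ => ?_
  by_cases hca : c = a
  · subst hca
    rw [Amat_diag, zero_mul, Finset.sum_eq_zero, mul_zero]
    intro g _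
    exact ite_self 0
  · obtain ⟨g₀, hg₀⟩ := Q2_exists a c (Ne.symm hca)
    rw [← Finset.sum_filter, Finset.sum_const,
      card_perm_torsor (Q2 a c) (Q2_comp a c) (Q2_inj a c) (Q2_range a c) g₀ hg₀,
      nsmul_eq_mul, ← mul_assoc, one_div, inv_mul_cancel₀
        (by exact_mod_cast (M + 1).factorial_ne_zero), one_mul]

include halt hvanish in
theorem entry_diag (hnormC : ∑ g : Fin (M + 1) → Fin (M + 3), x g * (starRingEnd ℂ) (x g)
      = ((M + 1).factorial : ℂ)) (a : Fin (M + 3)) :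
    ∑ c, Amat x a c * (starRingEnd ℂ) (Amat x a c) =
      1 - (1 / (M.factorial : ℂ)) * ∑ j : Fin M → Fin (M + 3),
        (starRingEnd ℂ) (x (Matrix.vecCons a j)) * x (Matrix.vecCons a j) := by
  classical
  set wg : (Fin (M + 1) → Fin (M + 3)) → ℂ := fun g => x g * (starRingEnd ℂ) (x g) with hwg
  have step1 : ∑ c, Amat x a c * (starRingEnd ℂ) (Amat x a c) =
      (1 / ((M + 1).factorial : ℂ)) *
        ∑ g : Fin (M + 1) → Fin (M + 3), (if Injective (Matrix.vecCons a g) then wg g else 0) := by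
    rw [stepA_diag x halt a, Finset.sum_comm]
    exact congrArg _ (Finset.sum_congr rfl fun g _ => stepB_diag x halt a g)
  -- split the total sum
  have split : ∀ g : Fin (M + 1) → Fin (M + 3), wg g =
      (if Injective (Matrix.vecCons a g) then wg g else 0) +
      (if (Injective g ∧ a ∈ Set.range g) then wg g else 0) := by
    intro g
    by_cases h1 : Injective (Matrix.vecCons a g)
    · rw [if_pos h1, if_neg, add_zero]
      rintro ⟨-, hmem⟩
      exact (vecCons_injective_iff.mp h1).1 hmem
    · rw [if_neg h1]
      by_cases h2 : Injective g ∧ a ∈ Set.range g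
      · rw [if_pos h2, zero_add]
      · rw [if_neg h2, add_zero]
        have hx : x g = 0 := by
          by_cases hg : Injective g
          · have hmem : a ∉ Set.range g := fun hmem => h2 ⟨hg, hmem⟩
            exact absurd (vecCons_injective_iff.mpr ⟨hmem, hg⟩) h1
          · exact hvanish g hg
        show x g * (starRingEnd ℂ) (x g) = 0
        rw [hx, zero_mul]
  have n3a : ∀ g : Fin (M + 1) → Fin (M + 3),
      (if (Injective g ∧ a ∈ Set.range g) then wg g else 0) =
      ∑ k : Fin (M + 1), (if (g k = a ∧ Injective g) then wg g else 0) := by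
    intro g
    by_cases h : Injective g ∧ a ∈ Set.range g
    · obtain ⟨k₀, hk₀⟩ := h.2
      rw [if_pos h, Finset.sum_eq_single k₀]
      · rw [if_pos ⟨hk₀, h.1⟩]
      · intro k _ hne
        refine if_neg ?_
        rintro ⟨hk, hinj⟩
        exact hne (hinj (hk.trans hk₀.symm))
      · intro hk; exact absurd (Finset.mem_univ k₀) hk
    · rw [if_neg h, Finset.sum_eq_zero]
      intro k _
      refine if_neg ?_
      rintro ⟨hk, hinj⟩
      exact h ⟨hinj, ⟨k, hk⟩⟩
  have n3b : ∀ k : Fin (M + 1),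
      (∑ g : Fin (M + 1) → Fin (M + 3), if (g k = a ∧ Injective g) then wg g else 0) =
      ∑ g : Fin (M + 1) → Fin (M + 3), (if (g 0 = a ∧ Injective g) then wg g else 0) := by
    intro k
    have hinv : Function.Involutive
        (fun g : Fin (M + 1) → Fin (M + 3) => g ∘ (Equiv.swap (0 : Fin (M + 1)) k)) := by
      intro g; funext i; simp [Equiv.swap_apply_self]
    refine Fintype.sum_bijective _ hinv.bijective _ _ fun g => ?_
    have hc : (g ∘ (Equiv.swap (0 : Fin (M + 1)) k)) 0 = g k := by
      simp [Equiv.swap_apply_left]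
    have hi : Injective (g ∘ (Equiv.swap (0 : Fin (M + 1)) k)) ↔ Injective g := by
      constructor
      · intro h
        have := h.comp (Equiv.swap (0 : Fin (M + 1)) k).symm.injective
        have e : (g ∘ (Equiv.swap (0 : Fin (M + 1)) k)) ∘ (Equiv.swap (0 : Fin (M + 1)) k).symm
            = g := by funext i; simp
        rwa [e] at this
      · intro h; exact h.comp (Equiv.swap (0 : Fin (M + 1)) k).injective
    have hw : wg (g ∘ (Equiv.swap (0 : Fin (M + 1)) k)) = wg g := wg_comp x halt g _
    simp only [hc, hi, hw]
  have n3c : (∑ g : Fin (M + 1) → Fin (M + 3), if (g 0 = a ∧ Injective g) then wg g else 0) =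
      ∑ j : Fin M → Fin (M + 3), wg (Matrix.vecCons a j) := by
    rw [← sum_cons_eq a wg]
    refine Finset.sum_congr rfl fun g _ => ?_
    by_cases h0 : g 0 = a
    · by_cases hinj : Injective g
      · rw [if_pos ⟨h0, hinj⟩, if_pos h0]
      · rw [if_neg (fun h => hinj h.2), if_pos h0]
        show 0 = x g * (starRingEnd ℂ) (x g)
        rw [hvanish g hinj, zero_mul]
    · rw [if_neg (fun h => h0 h.1), if_neg h0]
  have n3 : (∑ g : Fin (M + 1) → Fin (M + 3),
      if (Injective g ∧ a ∈ Set.range g) then wg g else 0) =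
      ((M + 1) : ℂ) * ∑ j : Fin M → Fin (M + 3), wg (Matrix.vecCons a j) := by
    rw [Finset.sum_congr rfl fun g _ => n3a g, Finset.sum_comm,
      Finset.sum_congr rfl fun k _ => (n3b k).trans n3c, Finset.sum_const]
    simp [nsmul_eq_mul]
  have split_sum : (∑ g : Fin (M + 1) → Fin (M + 3),
      (if Injective (Matrix.vecCons a g) then wg g else 0)) =
      ((M + 1).factorial : ℂ) - ((M + 1) : ℂ) * ∑ j : Fin M → Fin (M + 3),
        wg (Matrix.vecCons a j) := by
    have := Finset.sum_congr rfl (fun g (_ : g ∈ Finset.univ) => split g)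
    rw [hnormC] at this
    rw [Finset.sum_add_distrib] at this
    rw [n3] at this
    linear_combination -this
  rw [step1, split_sum]
  have hfac : ((M + 1).factorial : ℂ) = ((M + 1) : ℂ) * (M.factorial : ℂ) := by
    rw [Nat.factorial_succ]; push_cast; ring
  have hM : (M.factorial : ℂ) ≠ 0 := by exact_mod_cast M.factorial_ne_zero
  have hM1 : ((M + 1).factorial : ℂ) ≠ 0 := by exact_mod_cast (M + 1).factorial_ne_zero
  have hsum : ∀ j : Fin M → Fin (M + 3), wg (Matrix.vecCons a j) =
      (starRingEnd ℂ) (x (Matrix.vecCons a j)) * x (Matrix.vecCons a j) := by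
    intro j
    show x _ * (starRingEnd ℂ) (x _) = _
    ring
  have hM2 : ((M : ℂ) + 1) ≠ 0 := by exact_mod_cast Nat.succ_ne_zero M
  rw [Finset.sum_congr rfl fun j _ => hsum j, hfac]
  field_simp

include halt hvanish in
theorem entry_identity
    (hnormC : ∑ g : Fin (M + 1) → Fin (M + 3), x g * (starRingEnd ℂ) (x g)
      = ((M + 1).factorial : ℂ)) (a b : Fin (M + 3)) :
    ∑ c, Amat x a c * (starRingEnd ℂ) (Amat x b c) =
      (if a = b then 1 else 0) - (1 / (M.factorial : ℂ)) * ∑ j : Fin M → Fin (M + 3),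
        (starRingEnd ℂ) (x (Matrix.vecCons a j)) * x (Matrix.vecCons b j) := by
  by_cases hab : a = b
  · subst hab
    rw [if_pos rfl, entry_diag x halt hvanish hnormC a]
  · rw [if_neg hab, entry_offdiag x halt hvanish hab, zero_sub]

end Wave

section LinAlg

open scoped ComplexOrder

variable {R : ℕ}

theorem mulVec_conj (N : Matrix (Fin R) (Fin R) ℂ) (v : Fin R → ℂ) :
    (N.map (starRingEnd ℂ)) *ᵥ (fun a => (starRingEnd ℂ) (v a)) =
      fun a => (starRingEnd ℂ) ((N *ᵥ v) a) := by
  funext a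
  simp only [Matrix.mulVec, dotProduct, Matrix.map_apply, map_sum, _root_.map_mul]

theorem mulVec_dot (N : Matrix (Fin R) (Fin R) ℂ) (a b : Fin R → ℂ) :
    (N *ᵥ a) ⬝ᵥ b = a ⬝ᵥ (Nᵀ *ᵥ b) := by
  rw [Matrix.dotProduct_mulVec, Matrix.vecMul_transpose, dotProduct_comm]

theorem eigen_structure (B U : Matrix (Fin R) (Fin R) ℂ) (hB : Bᵀ = -B)
    (hU : U ∈ Matrix.unitaryGroup (Fin R) ℂ) (ν : Fin R → ℝ)
    (hP : B * Bᴴ = U * Matrix.diagonal (fun i => (ν i : ℂ)) * Uᴴ) :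
    (∀ i, 0 ≤ ν i) ∧
      ∀ t : ℝ, t ≠ 0 → Even (Finset.univ.filter (fun i => ν i = t)).card := by
  classical
  have hskew_entry : ∀ a b, B b a = -(B a b) := by
    intro a b
    have := congrFun (congrFun hB a) b
    simpa [Matrix.transpose_apply, Matrix.neg_apply] using this
  have hU1 : Uᴴ * U = 1 := by
    have := (Unitary.mem_iff.mp hU).1
    simpa [Matrix.star_eq_conjTranspose] using this
  have hU2 : U * Uᴴ = 1 := by
    have := (Unitary.mem_iff.mp hU).2
    simpa [Matrix.star_eq_conjTranspose] using this
  set D : Matrix (Fin R) (Fin R) ℂ := Matrix.diagonal (fun i => (ν i : ℂ)) with hD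
  set P : Matrix (Fin R) (Fin R) ℂ := B * Bᴴ with hPdef
  have hPU : P * U = U * D := by
    rw [hP, Matrix.mul_assoc (U * D), hU1, Matrix.mul_one]
  have hUP : Uᴴ * P = D * Uᴴ := by
    rw [hP, ← Matrix.mul_assoc, ← Matrix.mul_assoc, hU1, Matrix.one_mul]
  -- nonnegativity
  have hpsd : P.PosSemidef := Matrix.posSemidef_self_mul_conjTranspose B
  have hnonneg : ∀ i, 0 ≤ ν i := by
    intro i
    set col : Fin R → ℂ := fun a => U a i with hcol
    have hcolv : P *ᵥ col = ((ν i : ℂ)) • col := by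
      funext a
      have h1 : (P *ᵥ col) a = (P * U) a i := by
        simp [Matrix.mulVec, Matrix.mul_apply, dotProduct, hcol]
      rw [h1, hPU, Matrix.mul_diagonal]
      simp [hcol, mul_comm]
    have hdot : star col ⬝ᵥ col = 1 := by
      have h2 : star col ⬝ᵥ col = (Uᴴ * U) i i := by
        simp [Matrix.mul_apply, dotProduct, Matrix.conjTranspose_apply, hcol]
      rw [h2, hU1, Matrix.one_apply_eq]
    have h2 := hpsd.dotProduct_mulVec_nonneg col
    rw [hcolv, dotProduct_smul, hdot, smul_eq_mul, mul_one] at h2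
    exact Complex.zero_le_real.mp h2
  refine ⟨hnonneg, ?_⟩
  intro t ht
  set s : Finset (Fin R) := Finset.univ.filter (fun i => ν i = t) with hs
  set Bc : Matrix (Fin R) (Fin R) ℂ := B.map (starRingEnd ℂ) with hBc
  have hBH : Bᴴ = -Bc := by
    ext a b
    rw [Matrix.conjTranspose_apply, Matrix.neg_apply, hBc, Matrix.map_apply,
      hskew_entry a b, Complex.star_def, map_neg]
  have hBct : Bcᵀ = -Bc := by
    ext a b
    rw [Matrix.transpose_apply, Matrix.neg_apply, hBc, Matrix.map_apply, Matrix.map_apply,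
      hskew_entry a b, map_neg]
  have hPB : P = -(B * Bc) := by rw [hPdef, hBH, Matrix.mul_neg]
  set Pc : Matrix (Fin R) (Fin R) ℂ := P.map (starRingEnd ℂ) with hPcdef
  have hPc : Pc = -(Bc * B) := by
    rw [hPcdef, hPB]
    ext a b
    simp only [Matrix.map_apply, Matrix.neg_apply, map_neg, neg_inj]
    rw [Matrix.mul_apply, Matrix.mul_apply, map_sum]
    refine Finset.sum_congr rfl fun k _ => ?_
    simp [hBc, Matrix.map_apply]
  have hPBBPc : P * B = B * Pc := by
    rw [hPB, hPc, Matrix.neg_mul, Matrix.mul_neg, Matrix.mul_assoc]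
  set W : Matrix (Fin R) (Fin R) ℂ := Uᵀ * Bc * U with hW
  have hWt : Wᵀ = -W := by
    rw [hW, Matrix.transpose_mul, Matrix.transpose_mul, Matrix.transpose_transpose, hBct]
    noncomm_ring
  set C : Matrix {i // i ∈ s} {i // i ∈ s} ℂ := fun i j => W i.1 j.1 with hC
  have hCskew : ∀ i j, C j i = -C i j := by
    intro i j
    have h3 := congrFun (congrFun hWt i.1) j.1
    show W j.1 i.1 = -(W i.1 j.1)
    simpa [Matrix.transpose_apply, Matrix.neg_apply] using h3
  -- kernel of C is trivial
  have hker : ∀ c : {i // i ∈ s} → ℂ, C *ᵥ c = 0 → c = 0 := by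
    intro c hc
    set chat : Fin R → ℂ := fun k => if h : k ∈ s then c ⟨k, h⟩ else 0 with hchat
    set u : Fin R → ℂ := U *ᵥ chat with hu
    have hDc : D *ᵥ chat = (t : ℂ) • chat := by
      funext k
      rw [hD, Matrix.mulVec_diagonal]
      by_cases h : k ∈ s
      · have hh : ν k = t := by
          rw [hs] at h
          exact (Finset.mem_filter.mp h).2
        simp [hh]
      · simp [hchat, dif_neg h]
    have hPu : P *ᵥ u = (t : ℂ) • u := by
      rw [hu, Matrix.mulVec_mulVec, hPU, ← Matrix.mulVec_mulVec, hDc, Matrix.mulVec_smul]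
    set cu : Fin R → ℂ := fun a => (starRingEnd ℂ) (u a) with hcu
    have hPcu : Pc *ᵥ cu = (t : ℂ) • cu := by
      rw [hPcdef, hcu, mulVec_conj P u, hPu]
      funext a
      simp [Complex.conj_ofReal]
    set v : Fin R → ℂ := B *ᵥ cu with hv
    have hPv : P *ᵥ v = (t : ℂ) • v := by
      rw [hv, Matrix.mulVec_mulVec, hPBBPc, ← Matrix.mulVec_mulVec, hPcu, Matrix.mulVec_smul]
    set ehat : Fin R → ℂ := Uᴴ *ᵥ v with hehat
    have hve : v = U *ᵥ ehat := by
      rw [hehat, Matrix.mulVec_mulVec, hU2, Matrix.one_mulVec]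
    have hDe : D *ᵥ ehat = (t : ℂ) • ehat := by
      have h1 : Uᴴ *ᵥ (P *ᵥ v) = (D * Uᴴ) *ᵥ v := by
        rw [Matrix.mulVec_mulVec, hUP]
      rw [hPv, Matrix.mulVec_smul, ← hehat] at h1
      rw [← Matrix.mulVec_mulVec, ← hehat] at h1
      exact h1.symm
    have hesupp : ∀ k, k ∉ s → ehat k = 0 := by
      intro k hk
      have h1 := congrFun hDe k
      rw [hD, Matrix.mulVec_diagonal] at h1
      simp only [Pi.smul_apply, smul_eq_mul] at h1
      by_contra hne
      have h4 : ((ν k : ℂ)) = (t : ℂ) := mul_right_cancel₀ hne h1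
      have h5 : ν k = t := by exact_mod_cast h4
      exact hk (by rw [hs]; exact Finset.mem_filter.mpr ⟨Finset.mem_univ _, h5⟩)
    -- compute X two ways
    have hBcB : Bc * B = -Pc := by rw [hPc, neg_neg]
    have hX3 : u ⬝ᵥ (Bc *ᵥ v) = -(t : ℂ) * (u ⬝ᵥ cu) := by
      have h1 : Bc *ᵥ v = -((t : ℂ) • cu) := by
        rw [hv, Matrix.mulVec_mulVec, hBcB, Matrix.neg_mulVec, hPcu]
      rw [h1]
      simp [dotProduct_neg, dotProduct_smul, smul_eq_mul]
    have hX1 : u ⬝ᵥ (Bc *ᵥ v) = chat ⬝ᵥ (W *ᵥ ehat) := by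
      rw [hu, hve, mulVec_dot, Matrix.mulVec_mulVec, Matrix.mulVec_mulVec, hW,
        Matrix.mul_assoc]
    have hX2 : chat ⬝ᵥ (W *ᵥ ehat) = 0 := by
      rw [dotProduct]
      rw [← Finset.sum_subset (Finset.subset_univ s) (fun k _ hk => by
        rw [hchat]; simp [dif_neg hk])]
      have hWe : ∀ k, (W *ᵥ ehat) k = ∑ l ∈ s, W k l * ehat l := by
        intro k
        rw [Matrix.mulVec, dotProduct]
        rw [← Finset.sum_subset (Finset.subset_univ s) (fun l _ hl => by
          rw [hesupp l hl, mul_zero])]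
      rw [Finset.sum_congr rfl fun k _ => by rw [hWe k]]
      rw [Finset.sum_congr rfl fun k _ => Finset.mul_sum _ _ _]
      rw [Finset.sum_comm]
      refine Finset.sum_eq_zero fun l hl => ?_
      have hkey : ∑ k ∈ s, chat k * W k l = 0 := by
        rw [← Finset.sum_attach s (fun k => chat k * W k l)]
        have h6 : ∀ i : {x // x ∈ s}, chat i.1 * W i.1 l = -(C ⟨l, hl⟩ i * c i) := by
          intro i
          have h7 : chat i.1 = c i := by rw [hchat]; exact dif_pos i.2
          have h8 : W i.1 l = -(C ⟨l, hl⟩ i) := hCskew ⟨l, hl⟩ i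
          rw [h7, h8]
          ring
        rw [Finset.sum_congr rfl fun i _ => h6 i, ← Finset.univ_eq_attach,
          Finset.sum_neg_distrib]
        have h9 : (∑ x : {i // i ∈ s}, C ⟨l, hl⟩ x * c x) = 0 := by
          have h10 := congrFun hc ⟨l, hl⟩
          rwa [Matrix.mulVec, dotProduct, Pi.zero_apply] at h10
        rw [h9, neg_zero]
      calc (∑ k ∈ s, chat k * (W k l * ehat l))
          = (∑ k ∈ s, chat k * W k l) * ehat l := by
            rw [Finset.sum_mul]
            exact Finset.sum_congr rfl fun k _ => by ring
        _ = 0 := by rw [hkey, zero_mul]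
    have hucu : u ⬝ᵥ cu = 0 := by
      have h1 : -(t : ℂ) * (u ⬝ᵥ cu) = 0 := by rw [← hX3, hX1, hX2]
      have h2 : (-(t : ℂ)) ≠ 0 := neg_ne_zero.mpr (Complex.ofReal_ne_zero.mpr ht)
      exact (mul_eq_zero.mp h1).resolve_left h2
    have hu0 : u = 0 := by
      have h1 : u ⬝ᵥ cu = ((∑ a, Complex.normSq (u a) : ℝ) : ℂ) := by
        rw [dotProduct, hcu]
        push_cast
        exact Finset.sum_congr rfl fun a _ => (Complex.mul_conj (u a))
      rw [h1] at hucu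
      have h2 : (∑ a, Complex.normSq (u a)) = 0 := by exact_mod_cast hucu
      have h3 : ∀ a ∈ Finset.univ, Complex.normSq (u a) = 0 :=
        (Finset.sum_eq_zero_iff_of_nonneg (fun a _ => Complex.normSq_nonneg _)).mp h2
      funext a
      exact Complex.normSq_eq_zero.mp (h3 a (Finset.mem_univ a))
    have hchat0 : chat = 0 := by
      have h1 : chat = Uᴴ *ᵥ u := by
        rw [hu, Matrix.mulVec_mulVec, hU1, Matrix.one_mulVec]
      rw [h1, hu0, Matrix.mulVec_zero]
    funext i
    have h1 := congrFun hchat0 i.1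
    have h2 : chat i.1 = c i := by rw [hchat]; exact dif_pos i.2
    rw [h2] at h1
    exact h1
  -- conclude evenness
  have hdet : C.det ≠ 0 := by
    intro h0
    obtain ⟨cv, hcv0, hcv⟩ := (Matrix.exists_mulVec_eq_zero_iff).mpr h0
    exact hcv0 (hker cv hcv)
  have hCt : Cᵀ = -C := by
    ext i j
    rw [Matrix.transpose_apply, Matrix.neg_apply]
    exact hCskew i j
  have hd : C.det = (-1 : ℂ) ^ (Fintype.card {i // i ∈ s}) * C.det := by
    conv_lhs => rw [← Matrix.det_transpose C, hCt, Matrix.det_neg]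
  rcases Nat.even_or_odd s.card with he | ho
  · exact he
  · exfalso
    have hcard : Fintype.card {i // i ∈ s} = s.card := Fintype.card_coe s
    rw [hcard, Odd.neg_one_pow ho, neg_one_mul] at hd
    have h2 : (2 : ℂ) * C.det = 0 := by linear_combination hd
    exact hdet ((mul_eq_zero.mp h2).resolve_left two_ne_zero)

end LinAlg

end Coleman

open Matrix in
/-- **Coleman's theorem for odd `N` and rank `N + 2`.**
Let `N = 2n+1` (with `n ≥ 1`) and `R = N + 2`.  If `x` is an alternating,
normalized `N`-fermion wavefunction on `ℂ^R` whose one-particle reduced density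
matrix `γ` is invertible (so `γ` has full rank `R = N + 2`), and `μ` lists the
eigenvalues of `γ` in non-increasing order, then `μ 0 = 1` and the remaining
eigenvalues are doubly degenerate: `μ (2k+1) = μ (2k+2)` for `k = 0, …, n`. -/
theorem odd_N_rank_N_plus_two_necessary
    (n : ℕ) (hn : 1 ≤ n)
    (x : (Fin (2 * n + 1) → Fin (2 * n + 3)) → ℂ)
    (halt : ∀ (σ : Equiv.Perm (Fin (2 * n + 1))) (f : Fin (2 * n + 1) → Fin (2 * n + 3)),
        x (f ∘ σ) = ((Equiv.Perm.sign σ : ℤ) : ℂ) * x f)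
    (hvanish : ∀ f, ¬ Function.Injective f → x f = 0)
    (hnorm : ∑ f, ‖x f‖ ^ 2 = (Nat.factorial (2 * n + 1) : ℝ))
    (γ : Matrix (Fin (2 * n + 3)) (Fin (2 * n + 3)) ℂ)
    (hγ : ∀ a b, γ a b = (1 / (Nat.factorial (2 * n) : ℂ)) *
        ∑ j : Fin (2 * n) → Fin (2 * n + 3),
          x (Matrix.vecCons a j) * (starRingEnd ℂ) (x (Matrix.vecCons b j)))
    (hrank : IsUnit γ)
    (μ : Fin (2 * n + 3) → ℝ)
    (hmono : ∀ i j : Fin (2 * n + 3), i ≤ j → μ j ≤ μ i)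
    (U : Matrix (Fin (2 * n + 3)) (Fin (2 * n + 3)) ℂ)
    (hU : U ∈ Matrix.unitaryGroup (Fin (2 * n + 3)) ℂ)
    (hdiag : γ = U * Matrix.diagonal (fun i => (μ i : ℂ)) * star U) :
    μ 0 = 1 ∧ ∀ k : Fin (n + 1),
      μ ⟨2 * k.1 + 1, by have := k.2; omega⟩ = μ ⟨2 * k.1 + 2, by have := k.2; omega⟩ := by
  classical
  -- normalization in complex form
  have hnormC : ∑ g : Fin (2 * n + 1) → Fin (2 * n + 3), x g * (starRingEnd ℂ) (x g)
      = ((2 * n + 1).factorial : ℂ) := by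
    have h1 : ∀ g : Fin (2 * n + 1) → Fin (2 * n + 3),
        x g * (starRingEnd ℂ) (x g) = ((‖x g‖ ^ 2 : ℝ) : ℂ) := by
      intro g
      rw [Complex.mul_conj, Complex.sq_norm]
    rw [Finset.sum_congr rfl fun g _ => h1 g, ← Complex.ofReal_sum, hnorm]
    push_cast
    rfl
  -- the dual-state matrix
  set B := Matrix.of (fun a b : Fin (2 * n + 3) => (starRingEnd ℂ) (Coleman.Amat x a b))
    with hBdef
  have hBapp : ∀ a b, B a b = (starRingEnd ℂ) (Coleman.Amat x a b) := fun a b => rfl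
  have hBskew : Bᵀ = -B := by
    ext a b
    rw [Matrix.transpose_apply, Matrix.neg_apply, hBapp, hBapp, Coleman.Amat_skew x a b,
      map_neg]
  have hBBH : B * Bᴴ = 1 - γ := by
    ext a b
    rw [Matrix.mul_apply]
    have h1 : ∀ c, B a c * Bᴴ c b = (starRingEnd ℂ)
        (Coleman.Amat x a c * (starRingEnd ℂ) (Coleman.Amat x b c)) := by
      intro c
      rw [Matrix.conjTranspose_apply, hBapp, hBapp, Complex.star_def, _root_.map_mul]
    rw [Finset.sum_congr rfl fun c _ => h1 c, ← map_sum,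
      Coleman.entry_identity x halt hvanish hnormC a b]
    rw [map_sub, _root_.map_mul, map_sum]
    have h2 : (starRingEnd ℂ) (if a = b then (1:ℂ) else 0) = (if a = b then (1:ℂ) else 0) := by
      by_cases h : a = b <;> simp [h]
    have h3 : (starRingEnd ℂ) (1 / ((2 * n).factorial : ℂ)) = 1 / ((2 * n).factorial : ℂ) := by
      simp
    have h4 : ∀ j : Fin (2 * n) → Fin (2 * n + 3),
        (starRingEnd ℂ) ((starRingEnd ℂ) (x (Matrix.vecCons a j)) * x (Matrix.vecCons b j)) =
        x (Matrix.vecCons a j) * (starRingEnd ℂ) (x (Matrix.vecCons b j)) := by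
      intro j
      rw [_root_.map_mul, Complex.conj_conj]
    rw [h2, h3, Finset.sum_congr rfl fun j _ => h4 j]
    rw [Matrix.sub_apply, Matrix.one_apply, hγ a b]
  set ν : Fin (2 * n + 3) → ℝ := fun i => 1 - μ i with hν
  have hP : B * Bᴴ = U * Matrix.diagonal (fun i => ((ν i : ℝ) : ℂ)) * Uᴴ := by
    have hU2 : U * Uᴴ = 1 := by
      have := (Unitary.mem_iff.mp hU).2
      simpa [Matrix.star_eq_conjTranspose] using this
    have h1 : (1 : Matrix (Fin (2 * n + 3)) (Fin (2 * n + 3)) ℂ) -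
        Matrix.diagonal (fun i => ((μ i : ℝ) : ℂ)) =
        Matrix.diagonal (fun i => ((ν i : ℝ) : ℂ)) := by
      rw [← Matrix.diagonal_one, Matrix.diagonal_sub]
      refine congrArg Matrix.diagonal (funext fun i => ?_)
      show (1 : ℂ) - ((μ i : ℝ) : ℂ) = ((ν i : ℝ) : ℂ)
      rw [hν]
      push_cast
      ring
    rw [hBBH, hdiag, Matrix.star_eq_conjTranspose, ← h1, Matrix.mul_sub, Matrix.sub_mul,
      Matrix.mul_one, hU2]
  obtain ⟨hnn, heven⟩ := Coleman.eigen_structure B U hBskew hU ν hP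
  have hνmono : ∀ i j : Fin (2 * n + 3), i ≤ j → ν i ≤ ν j := by
    intro i j h
    have := hmono i j h
    rw [hν]
    simp only []
    linarith
  -- parity bookkeeping
  have fiber_parity : ∀ T : Finset (Fin (2 * n + 3)),
      (∀ i j, i ∈ T → ν j = ν i → j ∈ T) → (∃ i ∈ T, ν i = 0) →
      ∃ E, Even E ∧ T.card = E + (Finset.univ.filter (fun i => ν i = 0)).card := by
    intro T hclosed h0
    have hT : T.card = ∑ t ∈ T.image ν, (T.filter (fun i => ν i = t)).card :=
      Finset.card_eq_sum_card_fiberwise (fun i hi => Finset.mem_image_of_mem ν hi)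
    obtain ⟨i0, hi0T, hi00⟩ := h0
    have h0mem : (0 : ℝ) ∈ T.image ν := Finset.mem_image.mpr ⟨i0, hi0T, hi00⟩
    have hfull : ∀ t ∈ T.image ν,
        T.filter (fun i => ν i = t) = Finset.univ.filter (fun i => ν i = t) := by
      intro t htm
      obtain ⟨i1, hi1, rfl⟩ := Finset.mem_image.mp htm
      ext j
      simp only [Finset.mem_filter, Finset.mem_univ, true_and]
      exact ⟨fun h => h.2, fun h => ⟨hclosed i1 j hi1 h, h⟩⟩
    rw [Finset.sum_congr rfl (fun t ht => by rw [hfull t ht])] at hT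
    rw [← Finset.sum_erase_add _ _ h0mem] at hT
    refine ⟨∑ t ∈ (T.image ν).erase 0, (Finset.univ.filter (fun i => ν i = t)).card, ?_, hT⟩
    rw [Nat.even_iff, ← Nat.dvd_iff_mod_eq_zero]
    refine Finset.dvd_sum fun t ht => ?_
    have := heven t (Finset.ne_of_mem_erase ht)
    exact this.two_dvd
  -- there is a zero eigenvalue of `1 - γ`
  have hzero_ex : ∃ i, ν i = 0 := by
    by_contra h
    push_neg at h
    have hT : (Finset.univ : Finset (Fin (2 * n + 3))).card =
        ∑ t ∈ Finset.univ.image ν, (Finset.univ.filter (fun i => ν i = t)).card :=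
      Finset.card_eq_sum_card_fiberwise (fun i hi => Finset.mem_image_of_mem ν hi)
    have hdvd : 2 ∣ ∑ t ∈ Finset.univ.image ν, (Finset.univ.filter (fun i => ν i = t)).card := by
      refine Finset.dvd_sum fun t ht => ?_
      obtain ⟨i1, -, rfl⟩ := Finset.mem_image.mp ht
      exact (heven (ν i1) (h i1)).two_dvd
    rw [← hT, Finset.card_univ, Fintype.card_fin] at hdvd
    omega
  obtain ⟨i0, hi00⟩ := hzero_ex
  have hν0 : ν 0 = 0 := by
    have h1 : ν 0 ≤ ν i0 := hνmono 0 i0 (Fin.zero_le i0)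
    have h2 := hnn 0
    rw [hi00] at h1
    linarith
  have hm0odd : Odd (Finset.univ.filter (fun i => ν i = 0)).card := by
    obtain ⟨E, hE, hcardeq⟩ := fiber_parity Finset.univ (fun _ _ _ _ => Finset.mem_univ _)
      ⟨i0, Finset.mem_univ _, hi00⟩
    rw [Finset.card_univ, Fintype.card_fin] at hcardeq
    rw [Nat.even_iff] at hE
    rw [Nat.odd_iff]
    omega
  constructor
  · have : (1 : ℝ) - μ 0 = 0 := hν0
    linarith
  · intro k
    set i₁ : Fin (2 * n + 3) := ⟨2 * k.1 + 1, by have := k.2; omega⟩ with hi₁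
    set i₂ : Fin (2 * n + 3) := ⟨2 * k.1 + 2, by have := k.2; omega⟩ with hi₂
    show μ i₁ = μ i₂
    have hle : ν i₁ ≤ ν i₂ := hνmono i₁ i₂ (by rw [hi₁, hi₂, Fin.mk_le_mk]; omega)
    by_contra hne
    have hlt : ν i₁ < ν i₂ := by
      refine lt_of_le_of_ne hle fun h => hne ?_
      rw [hν] at h
      simp only [] at h
      linarith
    set S : Finset (Fin (2 * n + 3)) := Finset.univ.filter (fun i => ν i ≤ ν i₁) with hS
    have hScard : S.card = 2 * k.1 + 2 := by
      have hSeq : S = Finset.Iio i₂ := by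
        ext i
        rw [hS, Finset.mem_filter, Finset.mem_Iio]
        simp only [Finset.mem_univ, true_and]
        constructor
        · intro h
          by_contra hge
          push_neg at hge
          have h2 : i₂ ≤ i := hge
          have h3 := hνmono i₂ i hge
          linarith
        · intro h
          have h2 : i ≤ i₁ := by
            rw [Fin.le_def]
            rw [Fin.lt_def] at h
            rw [hi₁]
            rw [hi₂] at h
            simp only [] at h ⊢
            omega
          exact hνmono i i₁ h2
      rw [hSeq, Fin.card_Iio]
    obtain ⟨E, hE, hcardeq⟩ := fiber_parity S
      (fun i j hi hji => by
        rw [hS, Finset.mem_filter] at hi ⊢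
        exact ⟨Finset.mem_univ _, by rw [hji]; exact hi.2⟩)
      ⟨0, by
        rw [hS, Finset.mem_filter]
        exact ⟨Finset.mem_univ _, by rw [hν0]; exact hnn i₁⟩, hν0⟩
    rw [hScard] at hcardeq
    rw [Nat.even_iff] at hE
    rw [Nat.odd_iff] at hm0odd
    omega
end

section
/- Let k ≥ 1 and let V be a complex vector space of finite dimension k + 1. Then every element of the k-th exterior power ⋀[ℂ]^k V is decomposable: for every w ∈ ⋀[ℂ]^k V there exist vectors v₁, …, v_k ∈ V such that w = v₁ ∧ v₂ ∧ ⋯ ∧ v_k. (Equivalently: an antisymmetric k-particle state whose one-particle space has dimension at most k+1 is a single Slater determinant.) -/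
open ExteriorAlgebra

section Aux
variable {k : ℕ} {V : Type*} [AddCommGroup V] [Module ℂ V]

/-- `ιMulti` of a reordered sub-basis family equals a nonzero multiple of the standard one. -/
lemma auxSign (b : Module.Basis (Fin (k + 1)) ℂ V) (r : Fin k → Fin (k + 1))
    (hr : Function.Injective r) (i : Fin (k + 1)) (hi : ∀ j, r j ≠ i) :
    ∃ ε : ℂ, ε ≠ 0 ∧
      ιMulti ℂ k (fun j => b (r j)) =
        ε • ιMulti ℂ k (fun j => b (i.succAbove j)) := by
  have h1 : ∀ j, ∃ m, i.succAbove m = r j := fun j => Fin.exists_succAbove_eq (hi j)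
  choose σ hσ using h1
  have hσinj : Function.Injective σ := by
    intro a b' hab
    apply hr
    rw [← hσ, ← hσ, hab]
  have hbij : Function.Bijective σ := Finite.injective_iff_bijective.mp hσinj
  have key : (fun j => b (r j)) = (fun j => b (i.succAbove j)) ∘ (Equiv.ofBijective σ hbij) := by
    funext j
    simp [Equiv.ofBijective, hσ]
  rw [key, AlternatingMap.map_perm]
  rcases Int.units_eq_one_or (Equiv.Perm.sign (Equiv.ofBijective σ hbij)) with h | h <;> rw [h]
  · exact ⟨1, one_ne_zero, by simp⟩
  · exact ⟨-1, by norm_num, by simp⟩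

lemma auxSpan (b : Module.Basis (Fin (k + 1)) ℂ V) (x : ExteriorAlgebra ℂ V)
    (hx : x ∈ ⋀[ℂ]^k V) :
    x ∈ Submodule.span ℂ
      (Set.range fun i : Fin (k + 1) => ιMulti ℂ k (fun j => b (i.succAbove j))) := by
  rw [← ExteriorAlgebra.ιMulti_span_fixedDegree] at hx
  refine Submodule.span_le.mpr ?_ hx
  rintro _ ⟨v, rfl⟩
  have hv : ιMulti ℂ k v = ιMulti ℂ k (fun j => ∑ i, b.repr (v j) i • b i) := by
    congr 1
    funext j
    exact (b.sum_repr (v j)).symm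
  have h1 := (ιMulti ℂ k).toMultilinearMap.map_sum (fun j i => b.repr (v j) i • b i)
  simp only [AlternatingMap.coe_multilinearMap] at h1
  rw [hv, h1]
  refine Submodule.sum_mem _ fun r _ => ?_
  have h2 := (ιMulti ℂ k).toMultilinearMap.map_smul_univ
    (fun j => b.repr (v j) (r j)) (fun j => b (r j))
  simp only [AlternatingMap.coe_multilinearMap] at h2
  rw [h2]
  refine Submodule.smul_mem _ _ ?_
  by_cases hr : Function.Injective r
  · have hsurj : ¬Function.Surjective r := by
      intro hs
      have := Fintype.card_le_of_surjective r hs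
      simp at this
    have hex : ∃ i, ∀ j, r j ≠ i := by
      by_contra h
      push_neg at h
      exact hsurj fun i => h i
    obtain ⟨i, hi⟩ := hex
    obtain ⟨ε, -, hε⟩ := auxSign b r hr i (fun j h => hi j h)
    rw [hε]
    exact Submodule.smul_mem _ _ (Submodule.subset_span ⟨i, rfl⟩)
  · have hni : ¬Function.Injective (fun j => b (r j)) := by
      intro h
      exact hr fun a a' haa => h (by simp [haa])
    rw [AlternatingMap.map_eq_zero_of_not_injective _ _ hni]
    exact Submodule.zero_mem _

lemma auxDecomp (hk : 1 ≤ k) (b : Module.Basis (Fin (k + 1)) ℂ V) (a : Fin (k + 1) → ℂ) :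
    ∃ v : Fin k → V,
      (∑ i, a i • ιMulti ℂ k (fun j => b (i.succAbove j))) = ιMulti ℂ k v := by
  by_cases ha : a = 0
  · refine ⟨fun _ => 0, ?_⟩
    rw [(ιMulti ℂ k).map_coord_zero (m := fun _ => (0 : V)) (⟨0, hk⟩ : Fin k) rfl]
    simp [ha]
  · obtain ⟨i₀, hi₀⟩ := Function.ne_iff.mp ha
    simp only [Pi.zero_apply] at hi₀
    set u : Fin k → V := fun j => b (i₀.succAbove j) with hu
    set z : V := b i₀ with hz
    have hsign : ∀ j : Fin k, ∃ ε : ℂ, ε ≠ 0 ∧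
        ιMulti ℂ k (Function.update u j z) =
          ε • ιMulti ℂ k (fun t => b ((i₀.succAbove j).succAbove t)) := by
      intro j
      have hrinj : Function.Injective (Function.update (fun t => i₀.succAbove t) j i₀) := by
        intro p p' hpp
        by_cases hp : p = j <;> by_cases hp' : p' = j
        · rw [hp, hp']
        · rw [hp] at hpp
          rw [Function.update_self, Function.update_of_ne hp'] at hpp
          exact absurd hpp.symm (Fin.succAbove_ne i₀ p')
        · rw [hp'] at hpp
          rw [Function.update_self, Function.update_of_ne hp] at hpp
          exact absurd hpp (Fin.succAbove_ne i₀ p)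
        · rw [Function.update_of_ne hp, Function.update_of_ne hp'] at hpp
          exact Fin.succAbove_right_injective hpp
      have hrne : ∀ p, Function.update (fun t => i₀.succAbove t) j i₀ p ≠ i₀.succAbove j := by
        intro p
        rcases eq_or_ne p j with rfl | hp
        · rw [Function.update_self]
          exact (Fin.succAbove_ne i₀ p).symm
        · rw [Function.update_of_ne hp]
          exact fun h => hp (Fin.succAbove_right_injective h)
      obtain ⟨ε, hε0, hε⟩ := auxSign b _ hrinj (i₀.succAbove j) hrne
      refine ⟨ε, hε0, ?_⟩
      rw [← hε]
      congr 1
      funext p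
      rcases eq_or_ne p j with rfl | hp
      · rw [Function.update_self, Function.update_self]
      · rw [Function.update_of_ne hp, Function.update_of_ne hp]
    choose ε hε0 hε using hsign
    set c : Fin k → ℂ := fun j => (a i₀)⁻¹ * a (i₀.succAbove j) * (ε j)⁻¹ with hc
    set m : Fin k → V := fun j => c j • z with hm
    have hexp : ιMulti ℂ k (m + u) =
        ιMulti ℂ k u +
          ∑ j, (c j * ε j) • ιMulti ℂ k (fun t => b ((i₀.succAbove j).succAbove t)) := by
      have hadd := (ιMulti ℂ k).toMultilinearMap.map_add_univ m u
      simp only [AlternatingMap.coe_multilinearMap] at hadd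
      rw [hadd]
      have hzero : ∀ s : Finset (Fin k), 2 ≤ s.card →
          ιMulti ℂ k (s.piecewise m u) = 0 := by
        intro s hs
        apply AlternatingMap.map_linearDependent
        intro hLI
        obtain ⟨j, hj, j', hj', hjj'⟩ := Finset.one_lt_card.mp hs
        have hwj : s.piecewise m u j = c j • z := Finset.piecewise_eq_of_mem _ _ _ hj
        have hwj' : s.piecewise m u j' = c j' • z := Finset.piecewise_eq_of_mem _ _ _ hj'
        by_cases hcj : c j = 0
        · exact hLI.ne_zero j (by rw [hwj, hcj, zero_smul])
        · have hlin := Fintype.linearIndependent_iff.mp hLI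
            (fun t => if t = j then c j' else if t = j' then -(c j) else 0) ?_ j'
          · simp only [Ne.symm hjj', if_false, if_true, ite_true, ite_false,
              eq_self_iff_true, if_neg (Ne.symm hjj'), if_pos rfl, neg_eq_zero] at hlin
            exact hcj hlin
          · rw [Finset.sum_eq_add_of_mem j j' (Finset.mem_univ _) (Finset.mem_univ _) hjj'
              (by intro t _ htt; simp [htt.1, htt.2])]
            simp only [if_pos rfl, if_neg (Ne.symm hjj'), hwj, hwj', smul_smul,
              eq_self_iff_true, if_true, ite_true]
            rw [← add_smul, show c j' * c j + -c j * c j' = 0 by ring, zero_smul]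
      have hsubset : (insert (∅ : Finset (Fin k))
          (Finset.univ.image fun j : Fin k => ({j} : Finset (Fin k)))) ⊆ Finset.univ :=
        Finset.subset_univ _
      have hvanish : ∀ s ∈ Finset.univ, s ∉ insert (∅ : Finset (Fin k))
          (Finset.univ.image fun j : Fin k => ({j} : Finset (Fin k))) →
          ιMulti ℂ k (s.piecewise m u) = 0 := by
        intro s _ hs
        simp only [Finset.mem_insert, Finset.mem_image, Finset.mem_univ, true_and] at hs
        push_neg at hs
        obtain ⟨hs1, hs2⟩ := hs
        apply hzero
        by_contra hlt
        push_neg at hlt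
        rcases Nat.le_one_iff_eq_zero_or_eq_one.mp (Nat.lt_succ_iff.mp hlt) with h0 | h1
        · exact hs1.ne_empty (Finset.card_eq_zero.mp h0)
        · obtain ⟨j, rfl⟩ := Finset.card_eq_one.mp h1
          exact hs2 j rfl
      rw [← Finset.sum_subset hsubset hvanish]
      rw [Finset.sum_insert (by simp)]
      rw [Finset.sum_image (fun p _ p' _ h => Finset.singleton_injective h)]
      rw [Finset.piecewise_empty]
      congr 1
      refine Finset.sum_congr rfl fun j _ => ?_
      rw [Finset.piecewise_singleton]
      have : m j = c j • z := rfl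
      rw [this, AlternatingMap.map_update_smul, hε j, smul_smul]
    refine ⟨Function.update (m + u) ⟨0, hk⟩ ((a i₀) • (m + u) ⟨0, hk⟩), ?_⟩
    rw [AlternatingMap.map_update_smul, Function.update_eq_self, hexp]
    rw [Fin.sum_univ_succAbove (fun i => a i • ιMulti ℂ k fun j => b (i.succAbove j)) i₀]
    rw [smul_add, Finset.smul_sum]
    congr 1
    refine Finset.sum_congr rfl fun j _ => ?_
    rw [smul_smul]
    congr 1
    have hcj : c j = (a i₀)⁻¹ * a (i₀.succAbove j) * (ε j)⁻¹ := rfl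
    rw [hcj, mul_assoc ((a i₀)⁻¹ * a (i₀.succAbove j)) (ε j)⁻¹ (ε j),
      inv_mul_cancel₀ (hε0 j), mul_one, mul_inv_cancel_left₀ hi₀]
end Aux

/-- **Decomposability in the top-minus-one exterior power.**
If `V` is a complex vector space of dimension `k + 1` (with `k ≥ 1`), then every
element of the `k`-th exterior power `⋀[ℂ]^k V` is decomposable, i.e. of the form
`v₁ ∧ v₂ ∧ ⋯ ∧ v_k`.  (An antisymmetric `k`-particle state whose one-particle
space has dimension `k + 1` is a single Slater determinant.) -/
theorem exteriorPower_decomposable_of_finrank_eq_succ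
    (k : ℕ) (hk : 1 ≤ k)
    (V : Type*) [AddCommGroup V] [Module ℂ V] [FiniteDimensional ℂ V]
    (hdim : Module.finrank ℂ V = k + 1)
    (w : ⋀[ℂ]^k V) :
    ∃ v : Fin k → V, (w : ExteriorAlgebra ℂ V) = ExteriorAlgebra.ιMulti ℂ k v := by
  have b : Module.Basis (Fin (k + 1)) ℂ V := Module.finBasisOfFinrankEq ℂ V hdim
  have hmem := auxSpan b (w : ExteriorAlgebra ℂ V) w.2
  rw [Submodule.mem_span_range_iff_exists_fun ℂ] at hmem
  obtain ⟨a, ha⟩ := hmem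
  obtain ⟨v, hv⟩ := auxDecomp hk b a
  exact ⟨v, by rw [← ha, hv]⟩
end

section
/- Let A and B be n×n complex Hermitian matrices (n ≥ 2) and C = A + B, and let a₁ ≥ a₂ ≥ … ≥ a_n, b₁ ≥ … ≥ b_n, c₁ ≥ … ≥ c_n be the eigenvalues of A, B, C respectively, each listed in non-increasing order. Then a₁ + b₁ ≥ c₁, a₂ + b₁ ≥ c₂, and a₁ + b₂ ≥ c₂ (Weyl's inequalities). -/
open Matrix

lemma dot_adjoint (n : ℕ) (P : Matrix (Fin n) (Fin n) ℂ) (x y : Fin n → ℂ) :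
    star x ⬝ᵥ (P *ᵥ y) = star (star P *ᵥ x) ⬝ᵥ y := by
  simp [star_mulVec, dotProduct_mulVec, Matrix.star_eq_conjTranspose,
    conjTranspose_conjTranspose]

lemma dot_diag (n : ℕ) (d : Fin n → ℝ) (y : Fin n → ℂ) :
    star y ⬝ᵥ ((Matrix.diagonal (fun i => (d i : ℂ))) *ᵥ y)
      = ((∑ i, d i * Complex.normSq (y i) : ℝ) : ℂ) := by
  push_cast
  simp only [Matrix.mulVec_diagonal, dotProduct, Pi.star_apply]
  refine Finset.sum_congr rfl fun i _ => ?_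
  rw [show star (y i) = (starRingEnd ℂ) (y i) from rfl,
    show ((Complex.normSq (y i) : ℝ) : ℂ) = (starRingEnd ℂ) (y i) * y i from
      (Complex.normSq_eq_conj_mul_self).symm ▸ rfl]
  ring

lemma quad_eq (n : ℕ) (d : Fin n → ℝ) (P : Matrix (Fin n) (Fin n) ℂ) (x : Fin n → ℂ) :
    star x ⬝ᵥ ((P * Matrix.diagonal (fun i => (d i : ℂ)) * star P) *ᵥ x)
      = ((∑ i, d i * Complex.normSq ((star P *ᵥ x) i) : ℝ) : ℂ) := by
  rw [← Matrix.mulVec_mulVec, ← Matrix.mulVec_mulVec, dot_adjoint, ← dot_diag]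

lemma sum_normSq_dot (n : ℕ) (y : Fin n → ℂ) :
    ((∑ i, Complex.normSq (y i) : ℝ) : ℂ) = star y ⬝ᵥ y := by
  have := dot_diag n (fun _ => 1) y
  simpa using this.symm

lemma parseval (n : ℕ) (P : Matrix (Fin n) (Fin n) ℂ)
    (hP : P ∈ Matrix.unitaryGroup (Fin n) ℂ) (x : Fin n → ℂ) :
    ∑ i, Complex.normSq ((star P *ᵥ x) i) = ∑ i, Complex.normSq (x i) := by
  have h : ((∑ i, Complex.normSq ((star P *ᵥ x) i) : ℝ) : ℂ)
      = ((∑ i, Complex.normSq (x i) : ℝ) : ℂ) := by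
    rw [sum_normSq_dot, sum_normSq_dot, ← dot_adjoint,
      Matrix.mulVec_mulVec, hP.2, Matrix.one_mulVec]
  exact_mod_cast h

lemma sum_two {R : Type*} [CommRing R] {n : ℕ} (i0 i1 : Fin n) (hne : i1 ≠ i0)
    (f : Fin n → R) (u v : R) :
    ∑ i, f i * (if i = i0 then u else if i = i1 then v else 0)
      = f i0 * u + f i1 * v := by
  have h : ∀ i ∈ Finset.univ, f i * (if i = i0 then u else if i = i1 then v else 0)
      = (if i = i0 then f i0 * u else 0) + (if i = i1 then f i1 * v else 0) := by
    intro i _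
    split_ifs with h1 h2 <;> simp_all
  rw [Finset.sum_congr rfl h, Finset.sum_add_distrib,
    Finset.sum_ite_eq' Finset.univ i0, Finset.sum_ite_eq' Finset.univ i1]
  simp

/-- Core Weyl step. -/
lemma weyl_core (n : ℕ) (A B C : Matrix (Fin n) (Fin n) ℂ) (hC : C = A + B)
    (a b c : Fin n → ℝ)
    (U V W : Matrix (Fin n) (Fin n) ℂ)
    (hU : U ∈ Matrix.unitaryGroup (Fin n) ℂ)
    (hV : V ∈ Matrix.unitaryGroup (Fin n) ℂ)
    (hW : W ∈ Matrix.unitaryGroup (Fin n) ℂ)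
    (hdA : A = U * Matrix.diagonal (fun i => (a i : ℂ)) * star U)
    (hdB : B = V * Matrix.diagonal (fun i => (b i : ℂ)) * star V)
    (hdC : C = W * Matrix.diagonal (fun i => (c i : ℂ)) * star W)
    (i0 i1 : Fin n) (hne : i1 ≠ i0)
    (ha1 : ∀ i, i ≠ i0 → a i ≤ a i1)
    (hb0 : ∀ i, b i ≤ b i0)
    (hc1 : c i1 ≤ c i0) :
    c i1 ≤ a i1 + b i0 := by
  classical
  set G : Matrix (Fin n) (Fin n) ℂ := star U * W with hG
  set p : ℂ := G i0 i0 with hp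
  set q : ℂ := G i0 i1 with hq
  set α : ℂ := if p = 0 ∧ q = 0 then 1 else q with hα
  set β : ℂ := if p = 0 ∧ q = 0 then 0 else -p with hβ
  have horth : p * α + q * β = 0 := by
    by_cases h : p = 0 ∧ q = 0
    · simp [hα, hβ, h, h.1]
    · simp only [hα, hβ, if_neg h]; ring
  have hs : (0:ℝ) < Complex.normSq α + Complex.normSq β := by
    by_cases h : p = 0 ∧ q = 0
    · simp [hα, hβ, h]
    · rcases not_and_or.mp h with h' | h'
      · have h2 : Complex.normSq β ≠ 0 := by
          simp only [hβ, if_neg h]; simpa using h'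
        have h3 : 0 < Complex.normSq β := lt_of_le_of_ne (Complex.normSq_nonneg β) (Ne.symm h2)
        have := Complex.normSq_nonneg α
        linarith
      · have h2 : Complex.normSq α ≠ 0 := by
          simp only [hα, if_neg h]; simpa using h'
        have h3 : 0 < Complex.normSq α := lt_of_le_of_ne (Complex.normSq_nonneg α) (Ne.symm h2)
        have := Complex.normSq_nonneg β
        linarith
  set s : ℝ := Complex.normSq α + Complex.normSq β with hss
  -- the test vector
  set z : Fin n → ℂ := fun i => if i = i0 then α else if i = i1 then β else 0 with hz
  set x : Fin n → ℂ := W *ᵥ z with hx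
  -- quadratic forms
  have hqA := quad_eq n a U x
  have hqB := quad_eq n b V x
  have hqC := quad_eq n c W x
  rw [← hdA] at hqA
  rw [← hdB] at hqB
  rw [← hdC] at hqC
  set rA : Fin n → ℝ := fun i => Complex.normSq ((star U *ᵥ x) i) with hrA
  set rB : Fin n → ℝ := fun i => Complex.normSq ((star V *ᵥ x) i) with hrB
  set rC : Fin n → ℝ := fun i => Complex.normSq ((star W *ᵥ x) i) with hrC
  -- split C = A + B
  have hsplit : ∑ i, c i * rC i = ∑ i, a i * rA i + ∑ i, b i * rB i := by
    have h : ((∑ i, c i * rC i : ℝ) : ℂ)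
        = ((∑ i, a i * rA i + ∑ i, b i * rB i : ℝ) : ℂ) := by
      rw [Complex.ofReal_add, ← hqA, ← hqB, ← hqC, hC, Matrix.add_mulVec, dotProduct_add]
    exact_mod_cast h
  -- the W-coordinates of x are z
  have hWx : star W *ᵥ x = z := by
    rw [hx, Matrix.mulVec_mulVec, hW.1, Matrix.one_mulVec]
  have hzsq : ∀ i, Complex.normSq (z i)
      = (1:ℝ) * (if i = i0 then Complex.normSq α else if i = i1 then Complex.normSq β else 0) := by
    intro i; simp only [hz]; split_ifs <;> simp
  -- norm of z (hence of x)
  have hnormz : ∑ i, Complex.normSq (z i) = s := by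
    calc ∑ i, Complex.normSq (z i)
        = ∑ i, (1:ℝ) * (if i = i0 then Complex.normSq α else if i = i1 then Complex.normSq β else 0) :=
          Finset.sum_congr rfl fun i _ => hzsq i
      _ = (1:ℝ) * Complex.normSq α + (1:ℝ) * Complex.normSq β :=
          sum_two i0 i1 hne _ _ _
      _ = s := by rw [hss]; ring
  have hnormx : ∑ i, Complex.normSq (x i) = s := by
    rw [← parseval n W hW x, hWx, hnormz]
  have hsumrA : ∑ i, rA i = s := by
    simp only [hrA]; rw [parseval n U hU x, hnormx]
  have hsumrB : ∑ i, rB i = s := by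
    simp only [hrB]; rw [parseval n V hV x, hnormx]
  -- value of the C-form
  have hCval : ∑ i, c i * rC i = c i0 * Complex.normSq α + c i1 * Complex.normSq β := by
    calc ∑ i, c i * rC i = ∑ i, c i * Complex.normSq (z i) := by
          refine Finset.sum_congr rfl fun i _ => ?_
          simp only [hrC, hWx]
      _ = ∑ i, c i * ((1:ℝ) * (if i = i0 then Complex.normSq α else if i = i1 then Complex.normSq β else 0)) :=
          Finset.sum_congr rfl fun i _ => by rw [hzsq i]
      _ = ∑ i, c i * (if i = i0 then Complex.normSq α else if i = i1 then Complex.normSq β else 0) := by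
          refine Finset.sum_congr rfl fun i _ => by ring
      _ = c i0 * Complex.normSq α + c i1 * Complex.normSq β := sum_two i0 i1 hne _ _ _
  -- the A-coordinate at i0 vanishes
  have hrA0 : rA i0 = 0 := by
    have hcoord : (star U *ᵥ x) i0 = 0 := by
      rw [hx, Matrix.mulVec_mulVec, ← hG]
      show ∑ j, G i0 j * z j = 0
      rw [show (∑ j, G i0 j * z j)
          = ∑ j, G i0 j * (if j = i0 then α else if j = i1 then β else 0) from rfl,
        sum_two i0 i1 hne _ _ _, ← hp, ← hq]
      linear_combination horth
    simp [hrA, hcoord]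
  -- bounds
  have hAbound : ∑ i, a i * rA i ≤ a i1 * s := by
    rw [← hsumrA, Finset.mul_sum]
    refine Finset.sum_le_sum fun i _ => ?_
    by_cases h : i = i0
    · rw [h, hrA0]; simp
    · exact mul_le_mul_of_nonneg_right (ha1 i h) (Complex.normSq_nonneg _)
  have hBbound : ∑ i, b i * rB i ≤ b i0 * s := by
    rw [← hsumrB, Finset.mul_sum]
    exact Finset.sum_le_sum fun i _ =>
      mul_le_mul_of_nonneg_right (hb0 i) (Complex.normSq_nonneg _)
  have hClow : c i1 * s ≤ ∑ i, c i * rC i := by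
    rw [hCval, hss]
    nlinarith [Complex.normSq_nonneg α, Complex.normSq_nonneg β]
  have : c i1 * s ≤ (a i1 + b i0) * s := by
    calc c i1 * s ≤ ∑ i, c i * rC i := hClow
      _ = ∑ i, a i * rA i + ∑ i, b i * rB i := hsplit
      _ ≤ a i1 * s + b i0 * s := add_le_add hAbound hBbound
      _ = (a i1 + b i0) * s := by ring
  exact le_of_mul_le_mul_right this hs

/-- Top Weyl inequality. -/
lemma weyl_top (n : ℕ) (A B C : Matrix (Fin n) (Fin n) ℂ) (hC : C = A + B)
    (a b c : Fin n → ℝ)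
    (U V W : Matrix (Fin n) (Fin n) ℂ)
    (hU : U ∈ Matrix.unitaryGroup (Fin n) ℂ)
    (hV : V ∈ Matrix.unitaryGroup (Fin n) ℂ)
    (hW : W ∈ Matrix.unitaryGroup (Fin n) ℂ)
    (hdA : A = U * Matrix.diagonal (fun i => (a i : ℂ)) * star U)
    (hdB : B = V * Matrix.diagonal (fun i => (b i : ℂ)) * star V)
    (hdC : C = W * Matrix.diagonal (fun i => (c i : ℂ)) * star W)
    (i0 : Fin n)
    (ha0 : ∀ i, a i ≤ a i0)
    (hb0 : ∀ i, b i ≤ b i0) :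
    c i0 ≤ a i0 + b i0 := by
  classical
  set z : Fin n → ℂ := fun i => if i = i0 then 1 else 0 with hz
  set x : Fin n → ℂ := W *ᵥ z with hx
  have hqA := quad_eq n a U x
  have hqB := quad_eq n b V x
  have hqC := quad_eq n c W x
  rw [← hdA] at hqA
  rw [← hdB] at hqB
  rw [← hdC] at hqC
  set rA : Fin n → ℝ := fun i => Complex.normSq ((star U *ᵥ x) i) with hrA
  set rB : Fin n → ℝ := fun i => Complex.normSq ((star V *ᵥ x) i) with hrB
  set rC : Fin n → ℝ := fun i => Complex.normSq ((star W *ᵥ x) i) with hrC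
  have hsplit : ∑ i, c i * rC i = ∑ i, a i * rA i + ∑ i, b i * rB i := by
    have h : ((∑ i, c i * rC i : ℝ) : ℂ)
        = ((∑ i, a i * rA i + ∑ i, b i * rB i : ℝ) : ℂ) := by
      rw [Complex.ofReal_add, ← hqA, ← hqB, ← hqC, hC, Matrix.add_mulVec, dotProduct_add]
    exact_mod_cast h
  have hWx : star W *ᵥ x = z := by
    rw [hx, Matrix.mulVec_mulVec, hW.1, Matrix.one_mulVec]
  have hnormz : ∑ i, Complex.normSq (z i) = 1 := by
    rw [show (∑ i, Complex.normSq (z i))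
        = ∑ i, (if i = i0 then (1:ℝ) else 0) from
      Finset.sum_congr rfl fun i _ => by simp only [hz]; split_ifs <;> simp]
    simp [Finset.sum_ite_eq' Finset.univ i0]
  have hnormx : ∑ i, Complex.normSq (x i) = 1 := by
    rw [← parseval n W hW x, hWx, hnormz]
  have hsumrA : ∑ i, rA i = 1 := by
    simp only [hrA]; rw [parseval n U hU x, hnormx]
  have hsumrB : ∑ i, rB i = 1 := by
    simp only [hrB]; rw [parseval n V hV x, hnormx]
  have hCval : ∑ i, c i * rC i = c i0 := by
    rw [show (∑ i, c i * rC i) = ∑ i, (if i = i0 then c i0 else 0) from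
      Finset.sum_congr rfl fun i _ => by
        simp only [hrC, hWx, hz]; split_ifs with h <;> simp [h]]
    simp [Finset.sum_ite_eq' Finset.univ i0]
  have hAbound : ∑ i, a i * rA i ≤ a i0 := by
    calc ∑ i, a i * rA i ≤ ∑ i, a i0 * rA i :=
          Finset.sum_le_sum fun i _ =>
            mul_le_mul_of_nonneg_right (ha0 i) (Complex.normSq_nonneg _)
      _ = a i0 * ∑ i, rA i := by rw [Finset.mul_sum]
      _ = a i0 := by rw [hsumrA, mul_one]
  have hBbound : ∑ i, b i * rB i ≤ b i0 := by
    calc ∑ i, b i * rB i ≤ ∑ i, b i0 * rB i :=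
          Finset.sum_le_sum fun i _ =>
            mul_le_mul_of_nonneg_right (hb0 i) (Complex.normSq_nonneg _)
      _ = b i0 * ∑ i, rB i := by rw [Finset.mul_sum]
      _ = b i0 := by rw [hsumrB, mul_one]
  calc c i0 = ∑ i, c i * rC i := hCval.symm
    _ = ∑ i, a i * rA i + ∑ i, b i * rB i := hsplit
    _ ≤ a i0 + b i0 := add_le_add hAbound hBbound

/-- **Weyl's inequalities** for the top eigenvalues. -/
theorem weyl_inequalities
    (n : ℕ) (hn : 2 ≤ n)
    (A B C : Matrix (Fin n) (Fin n) ℂ)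
    (hA : A.IsHermitian) (hB : B.IsHermitian)
    (hC : C = A + B)
    (a b c : Fin n → ℝ)
    (ha : ∀ i j : Fin n, i ≤ j → a j ≤ a i)
    (hb : ∀ i j : Fin n, i ≤ j → b j ≤ b i)
    (hc : ∀ i j : Fin n, i ≤ j → c j ≤ c i)
    (U V W : Matrix (Fin n) (Fin n) ℂ)
    (hU : U ∈ Matrix.unitaryGroup (Fin n) ℂ)
    (hV : V ∈ Matrix.unitaryGroup (Fin n) ℂ)
    (hW : W ∈ Matrix.unitaryGroup (Fin n) ℂ)
    (hdA : A = U * Matrix.diagonal (fun i => (a i : ℂ)) * star U)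
    (hdB : B = V * Matrix.diagonal (fun i => (b i : ℂ)) * star V)
    (hdC : C = W * Matrix.diagonal (fun i => (c i : ℂ)) * star W) :
    a ⟨0, by omega⟩ + b ⟨0, by omega⟩ ≥ c ⟨0, by omega⟩ ∧
    a ⟨1, by omega⟩ + b ⟨0, by omega⟩ ≥ c ⟨1, by omega⟩ ∧
    a ⟨0, by omega⟩ + b ⟨1, by omega⟩ ≥ c ⟨1, by omega⟩ := by
  set i0 : Fin n := ⟨0, by omega⟩ with hi0
  set i1 : Fin n := ⟨1, by omega⟩ with hi1
  have hne : i1 ≠ i0 := by simp [hi0, hi1, Fin.ext_iff]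
  have h0le : ∀ i : Fin n, i0 ≤ i := fun i => by simp [hi0, Fin.le_def]
  have h1le : ∀ i : Fin n, i ≠ i0 → i1 ≤ i := by
    intro i h
    have : i.val ≠ 0 := fun hv => h (by simp [hi0, Fin.ext_iff, hv])
    simp only [hi1, Fin.le_def]
    omega
  refine ⟨?_, ?_, ?_⟩
  · exact weyl_top n A B C hC a b c U V W hU hV hW hdA hdB hdC i0
      (fun i => ha i0 i (h0le i)) (fun i => hb i0 i (h0le i))
  · exact weyl_core n A B C hC a b c U V W hU hV hW hdA hdB hdC i0 i1 hne
      (fun i h => ha i1 i (h1le i h)) (fun i => hb i0 i (h0le i))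
      (hc i0 i1 (h0le i1))
  · have := weyl_core n B A C (by rw [hC, add_comm]) b a c V U W hV hU hW hdB hdA hdC i0 i1 hne
      (fun i h => hb i1 i (h1le i h)) (fun i => ha i0 i (h0le i))
      (hc i0 i1 (h0le i1))
    linarith
end
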